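/- arXiv:1406.6395 — 6 statements merged into one kernel-verified Lean document; each statement's English description precedes it below -/
import Mathlib

section
/- If U_∞ is a Radon measure on ℝ₊^p satisfying the scaling property U_∞(c^{1/γ₁}x₁,…,c^{1/γ_p}x_p) = c·U_∞(x) for all c > 0 and x ∈ (0,∞)^p (with all γᵢ > 0), then the Laplace transform Û_∞(λ) = ∫ exp(-⟨λ,x⟩) dU_∞(x) is finite for every λ with all coordinates strictly positive. -/
open MeasureTheory Filter Set
open scoped ENNReal

lemma aux_real (ε a : ℝ) (hε : 0 < ε) (ha : 0 < a) :
    ∃ C : ℝ, 1 ≤ C ∧ ∀ n : ℕ,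
      Real.exp (-(ε * 2 ^ ((n : ℝ) * a))) * 2 ^ (n + 1) ≤ C * (1 / 2) ^ (n + 1) := by
  set k : ℕ := ⌈2 / a⌉₊ with hk_def
  have hk1 : 1 ≤ k := Nat.one_le_iff_ne_zero.mpr (by
    simp only [hk_def, ne_eq, Nat.ceil_eq_zero, not_le]
    positivity)
  have hka : 2 ≤ (k : ℝ) * a := by
    have := Nat.le_ceil (2 / a)
    calc (2:ℝ) = (2 / a) * a := by field_simp
      _ ≤ (k : ℝ) * a := by exact mul_le_mul_of_nonneg_right this ha.le
  have hkpos : (0:ℝ) < k := by exact_mod_cast hk1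
  refine ⟨max (4 * ((k : ℝ) / ε) ^ k) 1, le_max_right _ _, fun n => ?_⟩
  set t : ℝ := ε * 2 ^ ((n : ℝ) * a) with ht_def
  have ht : 0 < t := by positivity
  -- e^{-t} ≤ (k/t)^k
  have h1 : t / k ≤ Real.exp (t / k) := by
    have := Real.add_one_le_exp (t / k); linarith
  have h2 : (t / k) ^ k ≤ Real.exp t := by
    calc (t / k) ^ k ≤ (Real.exp (t / k)) ^ k := pow_le_pow_left₀ (by positivity) h1 k
      _ = Real.exp ((k : ℝ) * (t / k)) := (Real.exp_nat_mul _ k).symm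
      _ = Real.exp t := by rw [mul_div_cancel₀]; exact ne_of_gt hkpos
  have h3 : Real.exp (-t) ≤ ((k : ℝ) / t) ^ k := by
    rw [Real.exp_neg]
    rw [show ((k:ℝ)/t)^k = ((t/(k:ℝ))^k)⁻¹ by rw [← inv_pow, inv_div]]
    exact inv_anti₀ (by positivity) h2
  -- (k/t)^k ≤ (k/ε)^k * (1/4)^n
  have h4 : ((k : ℝ) / t) ^ k ≤ ((k : ℝ) / ε) ^ k * (1 / 4) ^ n := by
    have hsplit : (k : ℝ) / t = ((k : ℝ) / ε) * ((2:ℝ) ^ ((n : ℝ) * a))⁻¹ := by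
      rw [ht_def]; field_simp
    rw [hsplit, mul_pow, inv_pow]
    apply mul_le_mul_of_nonneg_left ?_ (by positivity)
    rw [← Real.rpow_natCast ((2:ℝ) ^ ((n:ℝ)*a)) k, ← Real.rpow_mul (by norm_num)]
    have hexp : (2:ℝ) * n ≤ (n : ℝ) * a * k := by
      calc (2:ℝ) * n ≤ ((k:ℝ) * a) * n := by
            apply mul_le_mul_of_nonneg_right hka (Nat.cast_nonneg n)
        _ = (n : ℝ) * a * k := by ring
    have h5 : (2:ℝ) ^ ((2:ℝ) * n) ≤ (2:ℝ) ^ ((n:ℝ) * a * k) :=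
      Real.rpow_le_rpow_of_exponent_le one_le_two hexp
    have h6 : (2:ℝ) ^ ((2:ℝ) * n) = 4 ^ n := by
      rw [Real.rpow_mul (by norm_num), Real.rpow_natCast, show (2:ℝ)^(2:ℝ) = 4 by
        rw [show (2:ℝ) = ((2:ℕ):ℝ) by norm_num, Real.rpow_natCast]; norm_num]
    rw [show ((1:ℝ)/4)^n = ((2:ℝ) ^ ((2:ℝ)*n))⁻¹ by rw [h6, one_div, inv_pow]]
    exact inv_anti₀ (by positivity) h5
  -- combine
  calc Real.exp (-(ε * 2 ^ ((n : ℝ) * a))) * 2 ^ (n + 1)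
      ≤ (((k:ℝ)/ε)^k * (1/4)^n) * 2 ^ (n+1) := by
        apply mul_le_mul_of_nonneg_right (h3.trans h4) (by positivity)
    _ = (4 * ((k:ℝ)/ε)^k) * (1/2)^(n+1) := by
        have h2n : ((1:ℝ)/2)^n * 2^n = 1 := by rw [← mul_pow]; norm_num
        have hpow : ((1:ℝ)/4)^n = (1/2)^n * (1/2)^n := by rw [← mul_pow]; norm_num
        rw [pow_succ (2:ℝ), pow_succ ((1:ℝ)/2), hpow]
        linear_combination (2 * ((k:ℝ)/ε)^k * ((1:ℝ)/2)^n) * h2n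
    _ ≤ max (4 * ((k : ℝ) / ε) ^ k) 1 * (1/2)^(n+1) := by
        apply mul_le_mul_of_nonneg_right (le_max_left _ _) (by positivity)


noncomputable def laplace {p : ℕ} (U : Measure (Fin p → ℝ)) (l : Fin p → ℝ) : ℝ≥0∞ :=
  ∫⁻ x, ENNReal.ofReal (Real.exp (-(∑ i, l i * x i))) ∂U

/-- If the Radon measure `Uinf` on `ℝ₊^p` satisfies the scaling property
`Uinf[0, c^{1/γ}x] = c · Uinf[0,x]` for all `c > 0`, `x ∈ (0,∞)^p` (all `γᵢ > 0`), then its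
Laplace transform is finite at every strictly positive argument. -/
theorem stmt4 {p : ℕ} (Uinf : Measure (Fin p → ℝ))
    (hsupp : Uinf {x | ∃ i, x i < 0} = 0)
    (hRadon : ∀ K : Set (Fin p → ℝ), IsCompact K → Uinf K < ⊤)
    (γ : Fin p → ℝ) (hγ : ∀ i, 0 < γ i)
    (hscale : ∀ c : ℝ, 0 < c → ∀ x : Fin p → ℝ, (∀ i, 0 < x i) →
      Uinf (Set.Icc 0 (fun i => c ^ (1 / γ i) * x i)) = ENNReal.ofReal c * Uinf (Set.Icc 0 x)) :
    ∀ l : Fin p → ℝ, (∀ i, 0 < l i) → laplace Uinf l < ⊤ := by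
  intro l hl
  classical
  have hMfin : Uinf (Set.Icc (0 : Fin p → ℝ) 1) < ⊤ := hRadon _ isCompact_Icc
  set M := Uinf (Set.Icc (0 : Fin p → ℝ) 1) with hMdef
  rcases Nat.eq_zero_or_pos p with hp | hp
  · -- degenerate case p = 0
    subst hp
    have hIcc : ∀ y : Fin 0 → ℝ, Set.Icc (0 : Fin 0 → ℝ) y = Set.univ := by
      intro y; ext x; simp [Set.mem_Icc, Pi.le_def, Fin.forall_fin_zero_pi]
    have h2 := hscale 2 (by norm_num) 1 (fun i => i.elim0)
    rw [hIcc, hIcc] at h2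
    have hfin : Uinf Set.univ ≠ ⊤ := (hRadon _ Set.finite_univ.isCompact).ne
    have h0 : Uinf Set.univ = 0 := by
      have h2' : Uinf Set.univ + 0 = Uinf Set.univ + Uinf Set.univ := by
        rw [add_zero]
        nth_rewrite 1 [h2]
        rw [show (ENNReal.ofReal 2) = 2 by simp, two_mul]
      exact ((ENNReal.add_right_inj hfin).mp h2').symm
    have hz : Uinf = 0 := Measure.measure_univ_eq_zero.mp h0
    rw [laplace, hz]
    simp
  · show (∫⁻ x, ENNReal.ofReal (Real.exp (-(∑ i, l i * x i))) ∂Uinf) < ⊤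
    haveI : Nonempty (Fin p) := ⟨⟨0, hp⟩⟩
    -- constants
    set a : ℝ := Finset.univ.inf' Finset.univ_nonempty (fun i => 1 / γ i) with ha_def
    have ha : 0 < a := by
      rw [ha_def, Finset.lt_inf'_iff]
      intro i _
      exact one_div_pos.mpr (hγ i)
    have hale : ∀ i, a ≤ 1 / γ i := fun i => Finset.inf'_le _ (Finset.mem_univ i)
    set ε : ℝ := Finset.univ.inf' Finset.univ_nonempty l with hε_def
    have hε : 0 < ε := by
      rw [hε_def, Finset.lt_inf'_iff]
      exact fun i _ => hl i
    have hεle : ∀ i, ε ≤ l i := fun i => Finset.inf'_le _ (Finset.mem_univ i)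
    -- boxes
    set b : ℕ → Fin p → ℝ := fun n i => ((2:ℝ) ^ n) ^ (1 / γ i) with hb_def
    have hbval : ∀ (n : ℕ) i, b n i = (2:ℝ) ^ ((n:ℝ) * (1 / γ i)) := by
      intro n i
      simp only [hb_def]
      rw [← Real.rpow_natCast 2 n, ← Real.rpow_mul (by norm_num)]
    have hbcoord : ∀ i, Monotone (fun n : ℕ => b n i) := by
      intro i m n hmn
      simp only [hbval]
      apply Real.rpow_le_rpow_of_exponent_le one_le_two
      exact mul_le_mul_of_nonneg_right (Nat.cast_le.mpr hmn) (one_div_pos.mpr (hγ i)).le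
    have hbpos : ∀ (n : ℕ) i, 0 < b n i := by
      intro n i; rw [hbval]; positivity
    set B : ℕ → Set (Fin p → ℝ) := fun n => Set.Icc 0 (b n) with hB_def
    have hBmono : Monotone B := by
      intro m n hmn
      exact Set.Icc_subset_Icc le_rfl (fun i => hbcoord i hmn)
    have hBmeas : ∀ n, MeasurableSet (B n) := fun n => measurableSet_Icc
    -- measure of boxes
    have hbox : ∀ n : ℕ, Uinf (B n) = ENNReal.ofReal (2 ^ n) * M := by
      intro n
      have h := hscale (2 ^ n) (by positivity) 1 (fun _ => one_pos)
      have heq : (fun i => ((2:ℝ) ^ n) ^ (1 / γ i) * (1 : Fin p → ℝ) i) = b n := by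
        funext i; simp [hb_def]
      rw [heq] at h
      exact h
    -- coverage
    have hcover : {x : Fin p → ℝ | ∀ i, 0 ≤ x i} ⊆ ⋃ n, B n := by
      intro x hx
      have hex : ∀ i, ∃ n : ℕ, x i ≤ b n i := by
        intro i
        have h1 : Tendsto (fun n : ℕ => ((2:ℝ) ^ n)) atTop atTop :=
          tendsto_pow_atTop_atTop_of_one_lt one_lt_two
        have h2 : Tendsto (fun n : ℕ => b n i) atTop atTop :=
          (tendsto_rpow_atTop (one_div_pos.mpr (hγ i))).comp h1
        exact (h2.eventually_ge_atTop (x i)).exists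
      choose f hf using hex
      refine Set.mem_iUnion.mpr ⟨Finset.univ.sup f, ?_⟩
      refine Set.mem_Icc.mpr ⟨fun i => hx i, fun i => ?_⟩
      exact (hf i).trans (hbcoord i (Finset.le_sup (Finset.mem_univ i)))
    -- disjointed pieces
    set D : ℕ → Set (Fin p → ℝ) := disjointed B with hD_def
    have hDsub : ∀ n, D n ⊆ B n := fun n => disjointed_subset B n
    have hDunion : (⋃ n, D n) = ⋃ n, B n := iUnion_disjointed
    set g : (Fin p → ℝ) → ℝ≥0∞ :=
      fun x => ENNReal.ofReal (Real.exp (-(∑ i, l i * x i))) with hg_def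
    set c : ℕ → ℝ≥0∞ := fun n =>
      Nat.casesOn n 1 (fun m => ENNReal.ofReal (Real.exp (-(ε * 2 ^ ((m:ℝ) * a))))) with hc_def
    have hgb : ∀ n, ∀ x ∈ D n, g x ≤ c n := by
      intro n x hx
      cases n with
      | zero =>
        have hx0 : x ∈ B 0 := hDsub 0 hx
        have hnn : 0 ≤ ∑ i, l i * x i :=
          Finset.sum_nonneg fun i _ => mul_nonneg (hl i).le (hx0.1 i)
        have hle : Real.exp (-(∑ i, l i * x i)) ≤ 1 :=
          Real.exp_le_one_iff.mpr (neg_nonpos.mpr hnn)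
        simpa [hg_def, hc_def] using ENNReal.ofReal_le_one.mpr hle
      | succ m =>
        have hx' : x ∈ B (m+1) \ B m := by
          rw [hD_def, hBmono.disjointed_add_one] at hx
          exact hx
        obtain ⟨hx1, hx2⟩ := hx'
        have hx0 : ∀ i, 0 ≤ x i := fun i => hx1.1 i
        have hbig : ∃ i, b m i < x i := by
          by_contra h
          push_neg at h
          exact hx2 ⟨hx1.1, fun i => h i⟩
        obtain ⟨i, hi⟩ := hbig
        have hsum : ε * 2 ^ ((m:ℝ) * a) ≤ ∑ j, l j * x j := by
          calc ε * 2 ^ ((m:ℝ) * a) ≤ l i * x i := by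
                apply mul_le_mul (hεle i) ?_ (by positivity) (hl i).le
                calc (2:ℝ) ^ ((m:ℝ) * a) ≤ 2 ^ ((m:ℝ) * (1 / γ i)) :=
                      Real.rpow_le_rpow_of_exponent_le one_le_two
                        (mul_le_mul_of_nonneg_left (hale i) (Nat.cast_nonneg m))
                  _ = b m i := (hbval m i).symm
                  _ ≤ x i := hi.le
            _ ≤ ∑ j, l j * x j :=
                Finset.single_le_sum (fun j _ => mul_nonneg (hl j).le (hx0 j)) (Finset.mem_univ i)
        simp only [hg_def, hc_def]
        exact ENNReal.ofReal_le_ofReal (Real.exp_le_exp.mpr (by linarith))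
    have hpiece : ∀ n, ∫⁻ x in D n, g x ∂Uinf ≤ c n * (ENNReal.ofReal (2 ^ n) * M) := by
      intro n
      calc ∫⁻ x in D n, g x ∂Uinf ≤ ∫⁻ _ in D n, c n ∂Uinf :=
            setLIntegral_mono measurable_const (hgb n)
        _ = c n * Uinf (D n) := setLIntegral_const _ _
        _ ≤ c n * Uinf (B n) := mul_le_mul_right (measure_mono (hDsub n)) _
        _ = c n * (ENNReal.ofReal (2 ^ n) * M) := by rw [hbox n]
    obtain ⟨C, hC1, hCb⟩ := aux_real ε a hε ha
    have hterm : ∀ n, c n * (ENNReal.ofReal ((2:ℝ) ^ n) * M)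
        ≤ ENNReal.ofReal C * ENNReal.ofReal ((1/2:ℝ) ^ n) * M := by
      intro n
      cases n with
      | zero =>
        simp only [hc_def, pow_zero, ENNReal.ofReal_one, one_mul, mul_one]
        simpa using mul_le_mul_left (ENNReal.one_le_ofReal.mpr hC1) M
      | succ m =>
        have hLHS : c (m+1) * (ENNReal.ofReal ((2:ℝ) ^ (m+1)) * M)
            = ENNReal.ofReal (Real.exp (-(ε * 2 ^ ((m:ℝ) * a))) * 2 ^ (m+1)) * M := by
          rw [← mul_assoc, ← ENNReal.ofReal_mul (Real.exp_nonneg _)]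
        have hRHS : ENNReal.ofReal C * ENNReal.ofReal ((1/2:ℝ) ^ (m+1)) * M
            = ENNReal.ofReal (C * (1/2:ℝ) ^ (m+1)) * M := by
          rw [← ENNReal.ofReal_mul (by linarith)]
        rw [hLHS, hRHS]
        exact mul_le_mul_left (ENNReal.ofReal_le_ofReal (hCb m)) M
    have hsumfin : ∑' n : ℕ, (ENNReal.ofReal C * ENNReal.ofReal ((1/2:ℝ) ^ n) * M) < ⊤ := by
      have heq : ∀ n : ℕ, ENNReal.ofReal C * ENNReal.ofReal ((1/2:ℝ) ^ n) * M
          = (ENNReal.ofReal C * M) * (ENNReal.ofReal (1/2)) ^ n := by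
        intro n
        rw [ENNReal.ofReal_pow (by norm_num)]
        ring
      rw [tsum_congr heq, ENNReal.tsum_mul_left, ENNReal.tsum_geometric]
      have hr : ENNReal.ofReal (1/2) < 1 := ENNReal.ofReal_lt_one.mpr (by norm_num)
      exact ENNReal.mul_lt_top (ENNReal.mul_lt_top ENNReal.ofReal_lt_top hMfin)
        (ENNReal.inv_lt_top.mpr (tsub_pos_of_lt hr))
    calc (∫⁻ x, g x ∂Uinf) = ∫⁻ x in Set.univ, g x ∂Uinf := (setLIntegral_univ _).symm
      _ ≤ ∫⁻ x in (⋃ n, D n) ∪ {x | ∃ i, x i < 0}, g x ∂Uinf := by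
          apply lintegral_mono_set
          intro x _
          by_cases h : ∀ i, 0 ≤ x i
          · exact Or.inl (hDunion ▸ hcover h)
          · push_neg at h
            exact Or.inr h
      _ ≤ (∫⁻ x in ⋃ n, D n, g x ∂Uinf) + ∫⁻ x in {x | ∃ i, x i < 0}, g x ∂Uinf :=
          lintegral_union_le _ _ _
      _ = ∫⁻ x in ⋃ n, D n, g x ∂Uinf := by
          rw [setLIntegral_measure_zero _ _ hsupp, add_zero]
      _ ≤ ∑' n, ∫⁻ x in D n, g x ∂Uinf := lintegral_iUnion_le _ _
      _ ≤ ∑' n, (c n * (ENNReal.ofReal ((2:ℝ) ^ n) * M)) := ENNReal.tsum_le_tsum hpiece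
      _ ≤ ∑' n, (ENNReal.ofReal C * ENNReal.ofReal ((1/2:ℝ) ^ n) * M) :=
          ENNReal.tsum_le_tsum hterm
      _ < ⊤ := hsumfin
end

section
/- A Radon measure U_∞ on ℝ₊^p with the scaling property U_∞(c^{1/γ₁}x₁,…,c^{1/γ_p}x_p) = c·U_∞(x) for all c > 0 has the property that every point x ∈ (0,∞)^p is a continuity point of the distribution function x ↦ U_∞([0,x]). -/
open MeasureTheory Filter Set
open scoped ENNReal

/-- A Radon measure `Uinf` on `ℝ₊^p` with the scaling property
`Uinf[0, c^{1/γ}x] = c · Uinf[0,x]` for all `c > 0` has the property that every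
`x ∈ (0,∞)^p` is a continuity point of the distribution function `x ↦ Uinf[0,x]`. -/
theorem stmt5 {p : ℕ} (Uinf : Measure (Fin p → ℝ))
    (hsupp : Uinf {x | ∃ i, x i < 0} = 0)
    (hRadon : ∀ K : Set (Fin p → ℝ), IsCompact K → Uinf K < ⊤)
    (γ : Fin p → ℝ) (hγ : ∀ i, 0 < γ i)
    (hscale : ∀ c : ℝ, 0 < c → ∀ x : Fin p → ℝ, (∀ i, 0 < x i) →
      Uinf (Set.Icc 0 (fun i => c ^ (1 / γ i) * x i)) = ENNReal.ofReal c * Uinf (Set.Icc 0 x)) :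
    ∀ x : Fin p → ℝ, (∀ i, 0 < x i) →
      ContinuousAt (fun y : Fin p → ℝ => (Uinf (Set.Icc 0 y)).toReal) x := by
  intro x hx
  have hfin : ∀ y : Fin p → ℝ, Uinf (Set.Icc 0 y) < ⊤ := fun y => hRadon _ isCompact_Icc
  rw [ContinuousAt, Metric.tendsto_nhds]
  intro ε hε
  set M := (Uinf (Set.Icc 0 x)).toReal with hM
  have hM0 : 0 ≤ M := ENNReal.toReal_nonneg
  set ε' : ℝ := min 1 (ε / (M + 1)) with hε'def
  have hε'pos : 0 < ε' := lt_min one_pos (div_pos hε (by linarith))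
  have hε'le : ε' ≤ ε / (M + 1) := min_le_right _ _
  set d : ℝ := 1 + ε' with hddef
  set c : ℝ := d⁻¹ with hcdef
  have hd1 : 1 < d := by simp [hddef]; linarith
  have hd0 : 0 < d := by linarith
  have hc0 : 0 < c := inv_pos.mpr hd0
  have hc1 : c < 1 := by
    rw [hcdef, inv_lt_one_iff₀]; right; exact hd1
  have hkey1 : (d - 1) * M < ε := by
    have : (d - 1) * M ≤ (ε / (M + 1)) * M := by
      apply mul_le_mul_of_nonneg_right _ hM0
      simpa [hddef] using hε'le
    calc (d - 1) * M ≤ (ε / (M + 1)) * M := this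
      _ < ε := by
          rw [div_mul_eq_mul_div, div_lt_iff₀ (by linarith : (0:ℝ) < M + 1)]
          nlinarith
  have hkey2 : (1 - c) * M < ε := by
    have hdc : d * c = 1 := mul_inv_cancel₀ (ne_of_gt hd0)
    have h1c : 1 - c ≤ d - 1 := by nlinarith [sq_nonneg (d - 1)]
    calc (1 - c) * M ≤ (d - 1) * M := mul_le_mul_of_nonneg_right h1c hM0
      _ < ε := hkey1
  -- scaled vectors
  set l : Fin p → ℝ := fun i => c ^ (1 / γ i) * x i with hldef
  set u : Fin p → ℝ := fun i => d ^ (1 / γ i) * x i with hudef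
  have hexp : ∀ i, (0:ℝ) < 1 / γ i := fun i => one_div_pos.mpr (hγ i)
  have hl_lt : ∀ i, l i < x i := fun i => by
    have h1 : c ^ (1 / γ i) < 1 := Real.rpow_lt_one hc0.le hc1 (hexp i)
    calc l i = c ^ (1 / γ i) * x i := rfl
      _ < 1 * x i := mul_lt_mul_of_pos_right h1 (hx i)
      _ = x i := one_mul _
  have hu_gt : ∀ i, x i < u i := fun i => by
    have h1 : 1 < d ^ (1 / γ i) :=
      Real.one_lt_rpow_iff_of_pos hd0 |>.mpr (Or.inl ⟨hd1, hexp i⟩)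
    calc x i = 1 * x i := (one_mul _).symm
      _ < d ^ (1 / γ i) * x i := mul_lt_mul_of_pos_right h1 (hx i)
      _ = u i := rfl
  have hl0 : ∀ i, 0 < l i := fun i => by
    have : (0:ℝ) < c ^ (1 / γ i) := Real.rpow_pos_of_pos hc0 _
    exact mul_pos this (hx i)
  -- values at the scaled points
  have hFu : (Uinf (Set.Icc 0 u)).toReal = d * M := by
    rw [hudef, hscale d hd0 x hx, ENNReal.toReal_mul, ENNReal.toReal_ofReal hd0.le]
  have hFl : (Uinf (Set.Icc 0 l)).toReal = c * M := by
    rw [hldef, hscale c hc0 x hx, ENNReal.toReal_mul, ENNReal.toReal_ofReal hc0.le]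
  -- neighborhood
  have hSopen : IsOpen (Set.pi Set.univ (fun i => Set.Ioo (l i) (u i))) :=
    isOpen_set_pi Set.finite_univ (fun i _ => isOpen_Ioo)
  have hxS : x ∈ Set.pi Set.univ (fun i => Set.Ioo (l i) (u i)) := fun i _ =>
    ⟨hl_lt i, hu_gt i⟩
  filter_upwards [hSopen.mem_nhds hxS] with y hy
  have hly : l ≤ y := fun i => (hy i (Set.mem_univ i)).1.le
  have hyu : y ≤ u := fun i => (hy i (Set.mem_univ i)).2.le
  have hmono1 : Uinf (Set.Icc 0 l) ≤ Uinf (Set.Icc 0 y) :=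
    measure_mono (Set.Icc_subset_Icc le_rfl hly)
  have hmono2 : Uinf (Set.Icc 0 y) ≤ Uinf (Set.Icc 0 u) :=
    measure_mono (Set.Icc_subset_Icc le_rfl hyu)
  have hr1 : c * M ≤ (Uinf (Set.Icc 0 y)).toReal := by
    rw [← hFl]
    exact ENNReal.toReal_mono (hfin y).ne hmono1
  have hr2 : (Uinf (Set.Icc 0 y)).toReal ≤ d * M := by
    rw [← hFu]
    exact ENNReal.toReal_mono (hfin u).ne hmono2
  rw [Real.dist_eq, abs_sub_lt_iff]
  constructor <;> nlinarith
end

section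
/- (Abelian direction of the multivariate Tauberian theorem) Suppose U is a measure on ℝ₊^p with finite Laplace transform at all strictly positive arguments, bᵢ(t) ∈ RV_{1/γᵢ} with γᵢ > 0, Uₜ := (1/t)U(b(t)·) converges vaguely in M₊(ℝ₊^p) to a nonzero Radon measure U_∞, and the uniform integrability condition lim_{y→∞} limsup_{t→∞} ∫_{∪ᵢ{vᵢ>y}} exp(-∑ᵢ vᵢ/xᵢ) Uₜ(dv) = 0 holds for all x > 0. Then (1/t)·Û(1/(b(t)x)) → Û_∞(1/x) for all x > 0 componentwise, where Û denotes the Laplace transform and 1/x is componentwise reciprocal. -/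
open MeasureTheory Filter Set
open scoped ENNReal

def VagueTendsto {ι E : Type*} [MeasurableSpace E] [TopologicalSpace E]
    (μ : ι → Measure E) (l : Filter ι) (ν : Measure E) : Prop :=
  ∀ f : E → ℝ, Continuous f → HasCompactSupport f →
    Filter.Tendsto (fun i => ∫ x, f x ∂(μ i)) l (nhds (∫ x, f x ∂ν))

def RegVarying (b : ℝ → ℝ) (ρ : ℝ) : Prop :=
  (∀ᶠ t in Filter.atTop, 0 < b t) ∧
    ∀ c : ℝ, 0 < c →
      Filter.Tendsto (fun t => b (c * t) / b t) Filter.atTop (nhds (c ^ ρ))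

/-- The rescaled measure `Uₜ = (1/t) U(b(t)·)`. -/
noncomputable def rescaled {p : ℕ} (U : Measure (Fin p → ℝ)) (b : Fin p → ℝ → ℝ)
    (t : ℝ) : Measure (Fin p → ℝ) :=
  (ENNReal.ofReal t)⁻¹ • Measure.map (fun v i => v i / b i t) U

lemma ennreal_limsup_add_le {ι : Type*} {f : Filter ι} [f.NeBot] {u v : ι → ℝ≥0∞} {a : ℝ≥0∞}
    (hu : Filter.Tendsto u f (nhds a)) :
    Filter.limsup (fun t => u t + v t) f ≤ a + Filter.limsup v f := by
  refine ENNReal.le_of_forall_pos_le_add fun ε hε hfin => ?_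
  have ha : a < ⊤ := lt_of_le_of_lt le_self_add hfin
  have hR : Filter.limsup v f < ⊤ := lt_of_le_of_lt le_add_self hfin
  have hδ0 : (0 : ℝ≥0∞) < (ε : ℝ≥0∞) / 2 := by
    simp [ENNReal.div_pos_iff, hε.ne']
  have h1 : ∀ᶠ t in f, u t < a + (ε : ℝ≥0∞) / 2 :=
    hu.eventually_lt_const (ENNReal.lt_add_right ha.ne hδ0.ne')
  have h2 : ∀ᶠ t in f, v t < Filter.limsup v f + (ε : ℝ≥0∞) / 2 :=
    eventually_lt_of_limsup_lt (ENNReal.lt_add_right hR.ne hδ0.ne')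
  have h3 : Filter.limsup (fun t => u t + v t) f
      ≤ (a + (ε : ℝ≥0∞) / 2) + (Filter.limsup v f + (ε : ℝ≥0∞) / 2) := by
    refine limsup_le_of_le (by isBoundedDefault) ?_
    filter_upwards [h1, h2] with t h1 h2
    exact add_le_add h1.le h2.le
  calc Filter.limsup (fun t => u t + v t) f
      ≤ (a + (ε : ℝ≥0∞) / 2) + (Filter.limsup v f + (ε : ℝ≥0∞) / 2) := h3
    _ = a + Filter.limsup v f + ((ε : ℝ≥0∞) / 2 + (ε : ℝ≥0∞) / 2) := by ring
    _ = a + Filter.limsup v f + (ε : ℝ≥0∞) := by rw [ENNReal.add_halves]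

/-- Abelian direction: if `U` has finite Laplace transform at strictly positive arguments,
`Uₜ = (1/t)U(b(t)·)` converges vaguely to a nonzero Radon measure `Uinf`, and the uniform
integrability condition holds, then `(1/t)·Û(1/(b(t)x)) → Û∞(1/x)` for all `x > 0`. -/
theorem stmt9 {p : ℕ} (U Uinf : Measure (Fin p → ℝ))
    (hsupp : U {x | ∃ i, x i < 0} = 0)
    (hfin : ∀ l : Fin p → ℝ, (∀ i, 0 < l i) → laplace U l < ⊤)
    (γ : Fin p → ℝ) (hγ : ∀ i, 0 < γ i)
    (b : Fin p → ℝ → ℝ) (hb : ∀ i, RegVarying (b i) (1 / γ i))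
    (hne : Uinf ≠ 0)
    (hRadonInf : ∀ K : Set (Fin p → ℝ), IsCompact K → Uinf K < ⊤)
    (hvague : VagueTendsto (rescaled U b) Filter.atTop Uinf)
    (hUI : ∀ x : Fin p → ℝ, (∀ i, 0 < x i) →
      Filter.Tendsto
        (fun y : ℝ => Filter.limsup
          (fun t => ∫⁻ v in {v : Fin p → ℝ | ∃ i, y < v i},
            ENNReal.ofReal (Real.exp (-(∑ i, v i / x i))) ∂(rescaled U b t))
          Filter.atTop)
        Filter.atTop (nhds 0)) :
    ∀ x : Fin p → ℝ, (∀ i, 0 < x i) →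
      Filter.Tendsto
        (fun t => (ENNReal.ofReal t)⁻¹ * laplace U (fun i => 1 / (b i t * x i)))
        Filter.atTop (nhds (laplace Uinf (fun i => 1 / x i))) := by
  intro x hx
  -- the limit integrand
  set f0 : (Fin p → ℝ) → ℝ := fun v => Real.exp (-(∑ i, v i / x i)) with hf0def
  set F : (Fin p → ℝ) → ℝ≥0∞ := fun v => ENNReal.ofReal (f0 v) with hFdef
  have hf0cont : Continuous f0 := by
    apply Real.continuous_exp.comp
    exact (continuous_finset_sum _ fun i _ => (continuous_apply i).div_const _).neg
  have hf0pos : ∀ v, 0 < f0 v := fun v => Real.exp_pos _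
  have hFmeas : Measurable F := ENNReal.measurable_ofReal.comp hf0cont.measurable
  -- step A : rewrite the scaled laplace transform as an integral against the rescaled measure
  have hA : ∀ t : ℝ, (ENNReal.ofReal t)⁻¹ * laplace U (fun i => 1 / (b i t * x i))
      = ∫⁻ v, F v ∂(rescaled U b t) := by
    intro t
    have hφ : Measurable (fun v : Fin p → ℝ => fun i => v i / b i t) :=
      measurable_pi_lambda _ fun i => (measurable_pi_apply i).div_const _
    rw [rescaled, lintegral_smul_measure, lintegral_map hFmeas hφ]
    unfold laplace
    congr 1
    refine lintegral_congr fun v => ?_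
    show ENNReal.ofReal (Real.exp (-(∑ i, 1 / (b i t * x i) * v i)))
        = ENNReal.ofReal (Real.exp (-(∑ i, v i / b i t / x i)))
    have hsum : (∑ i, 1 / (b i t * x i) * v i) = ∑ i, v i / b i t / x i :=
      Finset.sum_congr rfl fun i _ => by rw [one_div_mul_eq_div, div_div]
    rw [hsum]
  -- the value of the limit
  have hLinf : laplace Uinf (fun i => 1 / x i) = ∫⁻ v, F v ∂Uinf := by
    unfold laplace
    refine lintegral_congr fun v => ?_
    show ENNReal.ofReal (Real.exp (-(∑ i, 1 / x i * v i)))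
        = ENNReal.ofReal (Real.exp (-(∑ i, v i / x i)))
    have hsum : (∑ i, 1 / x i * v i) = ∑ i, v i / x i :=
      Finset.sum_congr rfl fun i _ => one_div_mul_eq_div _ _
    rw [hsum]
  set Lt : ℝ → ℝ≥0∞ := fun t => ∫⁻ v, F v ∂(rescaled U b t) with hLtdef
  set Linf : ℝ≥0∞ := ∫⁻ v, F v ∂Uinf with hLinfdef
  -- eventually good parameters
  have hPev : ∀ᶠ t : ℝ in atTop, 0 < t ∧ ∀ i, 0 < b i t :=
    (eventually_gt_atTop 0).and (eventually_all.mpr fun i => (hb i).1)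
  -- eventually the total mass integral is finite
  have hLfin : ∀ᶠ t : ℝ in atTop, Lt t < ⊤ := by
    filter_upwards [hPev] with t ht
    rw [show Lt t = (ENNReal.ofReal t)⁻¹ * laplace U (fun i => 1 / (b i t * x i)) from
      (hA t).symm]
    refine ENNReal.mul_lt_top ?_ ?_
    · exact ENNReal.inv_lt_top.mpr (ENNReal.ofReal_pos.mpr ht.1)
    · exact hfin _ fun i => one_div_pos.mpr (mul_pos (ht.2 i) (hx i))
  -- the negative-coordinate set
  set N : Set (Fin p → ℝ) := {v | ∃ i, v i < 0} with hNdef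
  have hNopen : IsOpen N := by
    have : N = ⋃ i, {v : Fin p → ℝ | v i < 0} := by
      ext v; simp [hNdef]
    rw [this]
    exact isOpen_iUnion fun i => isOpen_lt (continuous_apply i) continuous_const
  have hnull : ∀ᶠ t : ℝ in atTop, rescaled U b t N = 0 := by
    filter_upwards [hPev] with t ht
    have hφ : Measurable (fun v : Fin p → ℝ => fun i => v i / b i t) :=
      measurable_pi_lambda _ fun i => (measurable_pi_apply i).div_const _
    rw [rescaled, Measure.smul_apply, Measure.map_apply hφ hNopen.measurableSet]
    have hpre : (fun v : Fin p → ℝ => fun i => v i / b i t) ⁻¹' N = N := by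
      ext v
      simp only [hNdef, mem_preimage, mem_setOf_eq]
      constructor
      · rintro ⟨i, hi⟩
        refine ⟨i, ?_⟩
        by_contra h
        exact absurd (div_nonneg (not_lt.mp h) (ht.2 i).le) (not_le.mpr hi)
      · rintro ⟨i, hi⟩
        exact ⟨i, div_neg_of_neg_of_pos hi (ht.2 i)⟩
    rw [hpre, hsupp, smul_zero]
  -- cutoff functions
  set χ : ℕ → (Fin p → ℝ) → ℝ := fun n v => min 1 (max 0 ((n + 1 : ℝ) - ‖v‖)) with hχdef
  have hχcont : ∀ n, Continuous (χ n) := by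
    intro n
    exact (continuous_const.min ((continuous_const.max (continuous_const.sub continuous_norm))))
  have hχ0 : ∀ n v, 0 ≤ χ n v := fun n v => le_min zero_le_one (le_max_left _ _)
  have hχ1 : ∀ n v, χ n v ≤ 1 := fun n v => min_le_left _ _
  have hχeq1 : ∀ (n : ℕ) v, ‖v‖ ≤ (n : ℝ) → χ n v = 1 := by
    intro n v hv
    have : (1 : ℝ) ≤ (n + 1 : ℝ) - ‖v‖ := by linarith
    simp only [hχdef]
    rw [min_eq_left]
    exact le_max_of_le_right this
  have hχeq0 : ∀ (n : ℕ) v, (n + 1 : ℝ) ≤ ‖v‖ → χ n v = 0 := by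
    intro n v hv
    simp only [hχdef]
    rw [max_eq_left (by linarith), min_eq_right zero_le_one]
  set g : ℕ → (Fin p → ℝ) → ℝ := fun n v => f0 v * χ n v with hgdef
  have hgcont : ∀ n, Continuous (g n) := fun n => hf0cont.mul (hχcont n)
  have hgnonneg : ∀ n v, 0 ≤ g n v := fun n v => mul_nonneg (hf0pos v).le (hχ0 n v)
  have hgcs : ∀ n, HasCompactSupport (g n) := by
    intro n
    refine HasCompactSupport.intro (isCompact_closedBall (0 : Fin p → ℝ) (n + 1)) ?_
    intro v hv
    simp only [Metric.mem_closedBall, dist_zero_right, not_le] at hv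
    simp [hgdef, hχeq0 n v hv.le]
  have hgF : ∀ n v, ENNReal.ofReal (g n v) ≤ F v := by
    intro n v
    exact ENNReal.ofReal_le_ofReal (mul_le_of_le_one_right (hf0pos v).le (hχ1 n v))
  have hsplit : ∀ n v, F v = ENNReal.ofReal (g n v) + ENNReal.ofReal (f0 v * (1 - χ n v)) := by
    intro n v
    rw [← ENNReal.ofReal_add (hgnonneg n v) (mul_nonneg (hf0pos v).le (by linarith [hχ1 n v]))]
    show ENNReal.ofReal (f0 v) = _
    congr 1
    simp only [hgdef]
    ring
  -- transfer vague convergence to lintegrals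
  haveI : IsFiniteMeasureOnCompacts Uinf := ⟨fun {K} hK => hRadonInf K hK⟩
  set G : ℕ → ℝ → ℝ≥0∞ := fun n t => ∫⁻ v, ENNReal.ofReal (g n v) ∂(rescaled U b t) with hGdef
  set Ginf : ℕ → ℝ≥0∞ := fun n => ∫⁻ v, ENNReal.ofReal (g n v) ∂Uinf with hGinfdef
  have hGle : ∀ n t, G n t ≤ Lt t := fun n t => lintegral_mono (hgF n)
  have hGinfle : ∀ n, Ginf n ≤ Linf := fun n => lintegral_mono (hgF n)
  have hconv : ∀ n, Tendsto (G n) atTop (nhds (Ginf n)) := by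
    intro n
    have hint : Integrable (g n) Uinf := (hgcont n).integrable_of_hasCompactSupport (hgcs n)
    have heqinf : Ginf n = ENNReal.ofReal (∫ v, g n v ∂Uinf) :=
      (ofReal_integral_eq_lintegral_ofReal hint (Eventually.of_forall (hgnonneg n))).symm
    have h1 := hvague (g n) (hgcont n) (hgcs n)
    have h2 : Tendsto (fun t => ENNReal.ofReal (∫ v, g n v ∂(rescaled U b t))) atTop
        (nhds (ENNReal.ofReal (∫ v, g n v ∂Uinf))) :=
      (ENNReal.continuous_ofReal.tendsto _).comp h1
    rw [heqinf]
    refine Tendsto.congr' ?_ h2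
    filter_upwards [hLfin] with t ht
    have hintt : Integrable (g n) (rescaled U b t) := by
      refine ⟨(hgcont n).aestronglyMeasurable, ?_⟩
      rw [hasFiniteIntegral_iff_ofReal (Eventually.of_forall (hgnonneg n))]
      exact lt_of_le_of_lt (lintegral_mono (hgF n)) ht
    exact ofReal_integral_eq_lintegral_ofReal hintt (Eventually.of_forall (hgnonneg n))
  -- monotone convergence : Ginf n → Linf
  have hmono : ∀ v, Monotone fun n => ENNReal.ofReal (g n v) := by
    intro v
    apply monotone_nat_of_le_succ
    intro n
    refine ENNReal.ofReal_le_ofReal (mul_le_mul_of_nonneg_left ?_ (hf0pos v).le)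
    simp only [hχdef]
    have : ((n : ℝ) + 1) - ‖v‖ ≤ ((n + 1 : ℕ) : ℝ) + 1 - ‖v‖ := by push_cast; linarith
    exact min_le_min le_rfl (max_le_max le_rfl this)
  have hGinftend : Tendsto Ginf atTop (nhds Linf) := by
    refine lintegral_tendsto_of_tendsto_of_monotone
      (fun n => ((hgcont n).measurable.ennreal_ofReal).aemeasurable)
      (Eventually.of_forall hmono) (Eventually.of_forall fun v => ?_)
    have hev : ∀ᶠ n : ℕ in atTop, ENNReal.ofReal (g n v) = F v := by
      filter_upwards [eventually_ge_atTop ⌈‖v‖⌉₊] with n hn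
      have : ‖v‖ ≤ (n : ℝ) := le_trans (Nat.le_ceil _) (by exact_mod_cast hn)
      simp [hgdef, hχeq1 n v this, hFdef]
    exact Tendsto.congr' (hev.mono fun n h => h.symm) tendsto_const_nhds
  -- lower bound for liminf
  have hliminf : Linf ≤ liminf Lt atTop := by
    refine le_of_tendsto' hGinftend fun n => ?_
    have h1 : Ginf n = liminf (G n) atTop := (hconv n).liminf_eq.symm
    rw [h1]
    exact liminf_le_liminf (Eventually.of_forall fun t => hGle n t)
  -- tail bound
  set A : ℕ → Set (Fin p → ℝ) := fun n => {v | ∃ i, (n : ℝ) < v i} with hAdef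
  have hAmeas : ∀ n, MeasurableSet (A n) := by
    intro n
    have : A n = ⋃ i, {v : Fin p → ℝ | (n : ℝ) < v i} := by ext v; simp [hAdef]
    rw [this]
    exact MeasurableSet.iUnion fun i => measurableSet_lt measurable_const (measurable_pi_apply i)
  set T : ℕ → ℝ → ℝ≥0∞ := fun n t => ∫⁻ v in A n, F v ∂(rescaled U b t) with hTdef
  set R : ℕ → ℝ≥0∞ := fun n => limsup (T n) atTop with hRdef
  have hRlim : Tendsto R atTop (nhds 0) := by
    have := (hUI x hx).comp (tendsto_natCast_atTop_atTop (R := ℝ))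
    exact this
  -- eventual decomposition bound
  have hbound : ∀ n : ℕ, ∀ᶠ t : ℝ in atTop, Lt t ≤ G n t + T n t := by
    intro n
    filter_upwards [hnull] with t ht
    have hdecomp : Lt t = G n t + ∫⁻ v, ENNReal.ofReal (f0 v * (1 - χ n v)) ∂(rescaled U b t) := by
      rw [hLtdef, hGdef]
      rw [← lintegral_add_left ((hgcont n).measurable.ennreal_ofReal)]
      exact lintegral_congr fun v => hsplit n v
    rw [hdecomp]
    refine add_le_add_right ?_ _
    have hpt : ∀ v, ENNReal.ofReal (f0 v * (1 - χ n v)) ≤ (A n ∪ N).indicator F v := by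
      intro v
      by_cases hv : ‖v‖ ≤ (n : ℝ)
      · simp [hχeq1 n v hv]
      · have hvm : v ∈ A n ∪ N := by
          rw [not_le] at hv
          have := (pi_norm_le_iff_of_nonneg (Nat.cast_nonneg n : (0:ℝ) ≤ (n:ℝ))).not.mp hv.not_ge
          push_neg at this
          obtain ⟨i, hi⟩ := this
          rw [Real.norm_eq_abs, lt_abs] at hi
          rcases hi with hi | hi
          · exact Or.inl ⟨i, hi⟩
          · exact Or.inr ⟨i, by nlinarith [(Nat.cast_nonneg n : (0:ℝ) ≤ (n:ℝ))]⟩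
        rw [indicator_of_mem hvm]
        exact ENNReal.ofReal_le_ofReal
          (mul_le_of_le_one_right (hf0pos v).le (by linarith [hχ0 n v]))
    calc ∫⁻ v, ENNReal.ofReal (f0 v * (1 - χ n v)) ∂(rescaled U b t)
        ≤ ∫⁻ v, (A n ∪ N).indicator F v ∂(rescaled U b t) := lintegral_mono hpt
      _ = ∫⁻ v in A n ∪ N, F v ∂(rescaled U b t) := by
          rw [lintegral_indicator ((hAmeas n).union hNopen.measurableSet)]
      _ ≤ T n t + ∫⁻ v in N, F v ∂(rescaled U b t) := lintegral_union_le _ _ _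
      _ = T n t := by rw [setLIntegral_measure_zero _ _ ht, add_zero]
  -- upper bound for limsup
  have hlimsup : limsup Lt atTop ≤ Linf := by
    have hstep : ∀ n : ℕ, limsup Lt atTop ≤ Linf + R n := by
      intro n
      calc limsup Lt atTop ≤ limsup (fun t => G n t + T n t) atTop :=
            limsup_le_limsup (hbound n)
        _ ≤ Ginf n + limsup (T n) atTop := ennreal_limsup_add_le (hconv n)
        _ ≤ Linf + R n := add_le_add_left (hGinfle n) _
    have hlim : Tendsto (fun n => Linf + R n) atTop (nhds Linf) := by
      have := Tendsto.const_add Linf hRlim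
      simpa using this
    exact ge_of_tendsto' hlim hstep
  -- conclude
  have hmain : Tendsto Lt atTop (nhds Linf) :=
    tendsto_of_le_liminf_of_limsup_le hliminf hlimsup
  rw [hLinf]
  exact hmain.congr fun t => (hA t).symm
end

section
/- (Sufficient condition for the uniform integrability condition) Suppose U is a measure on ℝ₊^p such that for each i, the marginal Uᵢ(x) := U(ℝ₊ × ⋯ × [0,x] × ⋯ × ℝ₊) is finite for all x and satisfies Uᵢ(bᵢ(t)x)/t → x^{γᵢ} as t → ∞ for all x > 0, with bᵢ ∈ RV_{1/γᵢ}, γᵢ > 0. Then for every x > 0 componentwise, lim_{y→∞} limsup_{t→∞} ∫_{∪ᵢ{vᵢ>y}} exp(-∑ᵢ vᵢ/xᵢ) Uₜ(dv) = 0, where Uₜ(·) = (1/t)U(b(t)·). -/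
open MeasureTheory Filter Set
open scoped ENNReal

lemma aux_pow (γ : ℝ) (hγ : 0 < γ) (z : ℝ) (hz : 1 ≤ z) :
    ∃ m : ℕ, z ≤ ((2:ℝ) ^ (1/(2*γ)))^m ∧ ((2:ℝ))^m ≤ 2 * z ^ (2*γ) := by
  set r : ℝ := (2:ℝ) ^ (1/(2*γ)) with hrdef
  have hz0 : (0:ℝ) < z := lt_of_lt_of_le one_pos hz
  have hrpos : (0:ℝ) < r := Real.rpow_pos_of_pos two_pos _
  have hr1 : 1 < r := by
    rw [hrdef, Real.one_lt_rpow_iff_of_pos two_pos]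
    exact Or.inl ⟨one_lt_two, by positivity⟩
  set L := Real.logb r z with hL
  have hL0 : 0 ≤ L := Real.logb_nonneg hr1 hz
  have hzL : z = r ^ L := (Real.rpow_logb hrpos (ne_of_gt hr1) hz0).symm
  have hr2γ : r ^ (2*γ) = 2 := by
    rw [hrdef, ← Real.rpow_mul (by norm_num : (0:ℝ) ≤ 2)]
    rw [show (1/(2*γ)) * (2*γ) = 1 by field_simp]
    exact Real.rpow_one 2
  refine ⟨⌈L⌉₊, ?_, ?_⟩
  · calc z = r ^ L := hzL
      _ ≤ r ^ ((⌈L⌉₊ : ℝ)) := Real.rpow_le_rpow_of_exponent_le hr1.le (Nat.le_ceil L)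
      _ = r ^ (⌈L⌉₊ : ℕ) := Real.rpow_natCast r _
  · have hm : ((⌈L⌉₊ : ℝ)) ≤ L + 1 := (Nat.ceil_lt_add_one hL0).le
    calc (2:ℝ) ^ (⌈L⌉₊ : ℕ) = (2:ℝ) ^ ((⌈L⌉₊ : ℝ)) := (Real.rpow_natCast 2 _).symm
      _ = (r ^ (2*γ)) ^ ((⌈L⌉₊ : ℝ)) := by rw [hr2γ]
      _ = r ^ ((2*γ) * (⌈L⌉₊ : ℝ)) := (Real.rpow_mul hrpos.le _ _).symm
      _ ≤ r ^ ((2*γ) * (L + 1)) := by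
          apply Real.rpow_le_rpow_of_exponent_le hr1.le
          have : (0:ℝ) < 2*γ := by positivity
          nlinarith
      _ = r ^ (L * (2*γ) + 2*γ) := by ring_nf
      _ = r ^ (L * (2*γ)) * r ^ (2*γ) := Real.rpow_add hrpos _ _
      _ = (r ^ L) ^ (2*γ) * 2 := by rw [hr2γ, Real.rpow_mul hrpos.le]
      _ = 2 * z ^ (2*γ) := by rw [← hzL]; ring

lemma aux_summable (c e : ℝ) (hc : 0 < c) :
    Summable (fun k : ℕ => Real.exp (-((k:ℝ) * c)) * (4 * ((k:ℝ)+1) ^ e)) := by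
  set ρ : ℝ := Real.exp (-c) with hρ
  have hρpos : 0 < ρ := Real.exp_pos _
  have hρlt : ρ < 1 := by
    rw [hρ]; exact Real.exp_lt_one_iff.mpr (by linarith)
  set N := ⌈e⌉₊ with hN
  have base : Summable (fun n : ℕ => (n:ℝ)^N * ρ^n) :=
    summable_pow_mul_geometric_of_norm_lt_one N (by
      rw [Real.norm_eq_abs, abs_of_pos hρpos]; exact hρlt)
  have shifted : Summable (fun k : ℕ => ((k:ℝ)+1)^N * ρ^(k+1)) := by
    have := (summable_nat_add_iff (f := fun n : ℕ => (n:ℝ)^N * ρ^n) 1).2 base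
    refine this.congr fun k => ?_
    push_cast; ring
  have g_sum : Summable (fun k : ℕ => 4 * ((k:ℝ)+1)^N * ρ^k) := by
    have := (shifted.mul_left (4/ρ))
    refine this.congr fun k => ?_
    rw [pow_succ]
    field_simp
  refine Summable.of_nonneg_of_le (fun k => by positivity) (fun k => ?_) g_sum
  have h1 : Real.exp (-((k:ℝ) * c)) = ρ^k := by
    rw [hρ, ← Real.exp_nat_mul]; ring_nf
  have h2 : ((k:ℝ)+1) ^ e ≤ ((k:ℝ)+1) ^ (N:ℝ) := by
    apply Real.rpow_le_rpow_of_exponent_le (by push_cast; linarith [Nat.cast_nonneg (α := ℝ) k])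
    exact Nat.le_ceil e
  have h2' : ((k:ℝ)+1) ^ e ≤ ((k:ℝ)+1) ^ N := by
    rwa [Real.rpow_natCast] at h2
  calc Real.exp (-((k:ℝ) * c)) * (4 * ((k:ℝ)+1) ^ e)
      = (4 * ((k:ℝ)+1) ^ e) * ρ^k := by rw [h1]; ring
    _ ≤ (4 * ((k:ℝ)+1) ^ N) * ρ^k := by
        apply mul_le_mul_of_nonneg_right _ (by positivity)
        nlinarith
    _ = 4 * ((k:ℝ)+1)^N * ρ^k := by ring

lemma potter {p : ℕ} (U : Measure (Fin p → ℝ)) (i : Fin p) (γi : ℝ) (hγ : 0 < γi)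
    (bi : ℝ → ℝ) (hbv : RegVarying bi (1/γi))
    (hm : Filter.Tendsto (fun t => (ENNReal.ofReal t)⁻¹ * U {v | v i ≤ bi t * 1})
      Filter.atTop (nhds (ENNReal.ofReal ((1:ℝ) ^ γi)))) :
    ∀ᶠ t in Filter.atTop, (0 < bi t ∧ ∀ z : ℝ, 1 ≤ z →
      U {v | v i ≤ bi t * z} ≤ ENNReal.ofReal t * ENNReal.ofReal (4 * z ^ (2*γi))) := by
  set r : ℝ := (2:ℝ) ^ (1/(2*γi)) with hrdef
  have hrpos : (0:ℝ) < r := Real.rpow_pos_of_pos two_pos _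
  have hr1 : 1 < r := by
    rw [hrdef, Real.one_lt_rpow_iff_of_pos two_pos]
    exact Or.inl ⟨one_lt_two, by positivity⟩
  -- marginal bound
  have hm1 : Filter.Tendsto (fun t => (ENNReal.ofReal t)⁻¹ * U {v | v i ≤ bi t * 1})
      Filter.atTop (nhds 1) := by
    simpa [Real.one_rpow] using hm
  have hev1 : ∀ᶠ s in atTop, U {v | v i ≤ bi s} ≤ ENNReal.ofReal (2 * s) := by
    filter_upwards [hm1.eventually_lt_const (by norm_num : (1:ℝ≥0∞) < 2),
      eventually_ge_atTop (1:ℝ)] with s hs hs1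
    have hane : ENNReal.ofReal s ≠ 0 := by
      simp [ENNReal.ofReal_eq_zero]; linarith
    have hant : ENNReal.ofReal s ≠ ⊤ := ENNReal.ofReal_ne_top
    have : U {v | v i ≤ bi s * 1} ≤ ENNReal.ofReal s * 2 := by
      calc U {v | v i ≤ bi s * 1}
          = (ENNReal.ofReal s * (ENNReal.ofReal s)⁻¹) * U {v | v i ≤ bi s * 1} := by
            rw [ENNReal.mul_inv_cancel hane hant, one_mul]
        _ = ENNReal.ofReal s * ((ENNReal.ofReal s)⁻¹ * U {v | v i ≤ bi s * 1}) := by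
            rw [mul_assoc]
        _ ≤ ENNReal.ofReal s * 2 := mul_le_mul_right hs.le _
    rw [mul_one] at this
    calc U {v | v i ≤ bi s} ≤ ENNReal.ofReal s * 2 := this
      _ = ENNReal.ofReal (2 * s) := by
          rw [ENNReal.ofReal_mul (by norm_num : (0:ℝ) ≤ 2)]
          rw [ENNReal.ofReal_ofNat]; ring
  -- doubling bound for bi
  have hrlt : r < 2 ^ ((1:ℝ)/γi) := by
    rw [hrdef]
    apply Real.rpow_lt_rpow_of_exponent_lt one_lt_two
    rw [div_lt_div_iff₀ (by positivity) (by positivity)]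
    nlinarith
  have hev2 : ∀ᶠ s in atTop, (0 < bi s ∧ r * bi s ≤ bi (2*s)) := by
    filter_upwards [hbv.1, (hbv.2 2 two_pos).eventually_const_lt hrlt] with s hs hs2
    exact ⟨hs, (le_div_iff₀ hs).1 hs2.le⟩
  obtain ⟨T1, hT1⟩ := eventually_atTop.1 hev1
  obtain ⟨T2, hT2⟩ := eventually_atTop.1 hev2
  rw [eventually_atTop]
  refine ⟨max (max T1 T2) 1, fun t ht => ?_⟩
  have ht1 : T1 ≤ t := le_trans (le_max_left _ _) (le_trans (le_max_left _ _) ht)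
  have ht2 : T2 ≤ t := le_trans (le_max_right _ _) (le_trans (le_max_left _ _) ht)
  have htpos : (1:ℝ) ≤ t := le_trans (le_max_right _ _) ht
  -- iterated doubling
  have key : ∀ m : ℕ, ∀ s : ℝ, T2 ≤ s → 0 < s → r^m * bi s ≤ bi (2^m * s) := by
    intro m
    induction m with
    | zero => intro s _ _; simp
    | succ m ih =>
      intro s hs hspos
      have h2s : T2 ≤ 2*s := by linarith
      have := ih (2*s) h2s (by linarith)
      have hstep := (hT2 s hs).2
      have hrm : (0:ℝ) ≤ r^m := by positivity
      calc r^(m+1) * bi s = r^m * (r * bi s) := by ring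
        _ ≤ r^m * bi (2*s) := by
            apply mul_le_mul_of_nonneg_left hstep hrm
        _ ≤ bi (2^m * (2*s)) := this
        _ = bi (2^(m+1) * s) := by ring_nf
  refine ⟨(hT2 t ht2).1, fun z hz => ?_⟩
  obtain ⟨m, hmz, hm2⟩ := aux_pow γi hγ z hz
  have hbt : 0 < bi t := (hT2 t ht2).1
  have hchain : bi t * z ≤ bi (2^m * t) := by
    calc bi t * z ≤ bi t * r^m := by
          apply mul_le_mul_of_nonneg_left hmz hbt.le
      _ = r^m * bi t := by ring
      _ ≤ bi (2^m * t) := key m t ht2 (by linarith)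
  have hsub : {v : Fin p → ℝ | v i ≤ bi t * z} ⊆ {v | v i ≤ bi (2^m * t)} :=
    fun v hv => le_trans hv hchain
  have h2mt : T1 ≤ 2^m * t := by
    have h1 : (1:ℝ) ≤ 2^m := one_le_pow₀ one_le_two
    nlinarith
  calc U {v | v i ≤ bi t * z} ≤ U {v | v i ≤ bi (2^m * t)} := measure_mono hsub
    _ ≤ ENNReal.ofReal (2 * (2^m * t)) := hT1 _ h2mt
    _ ≤ ENNReal.ofReal (t * (4 * z ^ (2*γi))) := by
        apply ENNReal.ofReal_le_ofReal
        have hzpos : (0:ℝ) ≤ z ^ (2*γi) := Real.rpow_nonneg (by linarith) _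
        nlinarith
    _ = ENNReal.ofReal t * ENNReal.ofReal (4 * z ^ (2*γi)) := by
        rw [ENNReal.ofReal_mul (by linarith)]

/-- Sufficient condition for the uniform integrability condition: if each marginal
`Uᵢ(x) = U{v : vᵢ ≤ x}` is finite and satisfies `Uᵢ(bᵢ(t)x)/t → x^{γᵢ}`, then
`lim_{y→∞} limsup_{t→∞} ∫_{∪ᵢ{vᵢ>y}} exp(-∑ᵢ vᵢ/xᵢ) Uₜ(dv) = 0` for all `x > 0`. -/
theorem stmt10 {p : ℕ} (U : Measure (Fin p → ℝ))
    (hsupp : U {x | ∃ i, x i < 0} = 0)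
    (γ : Fin p → ℝ) (hγ : ∀ i, 0 < γ i)
    (b : Fin p → ℝ → ℝ) (hb : ∀ i, RegVarying (b i) (1 / γ i))
    (hmarg_fin : ∀ i, ∀ x : ℝ, U {v | v i ≤ x} < ⊤)
    (hmarg : ∀ i, ∀ x : ℝ, 0 < x →
      Filter.Tendsto (fun t => (ENNReal.ofReal t)⁻¹ * U {v | v i ≤ b i t * x})
        Filter.atTop (nhds (ENNReal.ofReal (x ^ γ i)))) :
    ∀ x : Fin p → ℝ, (∀ i, 0 < x i) →
      Filter.Tendsto
        (fun y : ℝ => Filter.limsup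
          (fun t => ∫⁻ v in {v : Fin p → ℝ | ∃ i, y < v i},
            ENNReal.ofReal (Real.exp (-(∑ i, v i / x i))) ∂(rescaled U b t))
          Filter.atTop)
        Filter.atTop (nhds 0) := by
  intro x hx
  classical
  set f : (Fin p → ℝ) → ℝ≥0∞ := fun v => ENNReal.ofReal (Real.exp (-(∑ i, v i / x i)))
    with hf
  have hfmeas : Measurable f := by
    apply ENNReal.measurable_ofReal.comp
    apply Real.measurable_exp.comp
    apply Measurable.neg
    exact Finset.measurable_sum _ (fun i _ => (measurable_pi_apply i).div_const _)
  -- the constants K i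
  set K : Fin p → ℝ≥0∞ := fun i => ∑' k : ℕ, ENNReal.ofReal
      (Real.exp (-((k:ℝ) / (2 * x i))) * (4 * ((k:ℝ)+1) ^ (2 * γ i))) with hK
  have hKfin : ∀ i, K i ≠ ⊤ := by
    intro i
    have hs := aux_summable (1/(2*x i)) (2*γ i) (by have := hx i; positivity)
    have hs' : Summable (fun k : ℕ =>
        Real.exp (-((k:ℝ) / (2 * x i))) * (4 * ((k:ℝ)+1) ^ (2*γ i))) :=
      hs.congr (fun k => by rw [mul_one_div])
    have heq := ENNReal.ofReal_tsum_of_nonneg (fun k => by positivity) hs'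
    show (∑' k : ℕ, ENNReal.ofReal
      (Real.exp (-((k:ℝ) / (2 * x i))) * (4 * ((k:ℝ)+1) ^ (2 * γ i)))) ≠ ⊤
    rw [← heq]
    exact ENNReal.ofReal_ne_top
  -- the majorant Φ
  set Φ : ℝ → ℝ≥0∞ := fun y => ∑ i : Fin p,
    ENNReal.ofReal (Real.exp (-(y / (2 * x i)))) * K i with hΦ
  have hΦ0 : Tendsto Φ atTop (nhds 0) := by
    have hterm : ∀ i : Fin p, Tendsto
        (fun y : ℝ => ENNReal.ofReal (Real.exp (-(y / (2 * x i)))) * K i) atTop (nhds 0) := by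
      intro i
      have h1 : Tendsto (fun y : ℝ => y / (2 * x i)) atTop atTop :=
        tendsto_id.atTop_div_const (by have := hx i; positivity)
      have h2 : Tendsto (fun y : ℝ => -(y / (2 * x i))) atTop atBot :=
        tendsto_neg_atTop_atBot.comp h1
      have h3 : Tendsto (fun y : ℝ => Real.exp (-(y / (2 * x i)))) atTop (nhds 0) :=
        Real.tendsto_exp_atBot.comp h2
      have h4 := ENNReal.tendsto_ofReal h3
      simpa using ENNReal.Tendsto.mul_const h4 (Or.inr (hKfin i))
    have := tendsto_finset_sum Finset.univ (fun i _ => hterm i)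
    simpa [hΦ] using this
  -- Potter bounds, uniformly over i, eventually in t
  have hPot : ∀ᶠ t in atTop, ∀ i, (0 < b i t ∧ ∀ z : ℝ, 1 ≤ z →
      U {v | v i ≤ b i t * z} ≤ ENNReal.ofReal t * ENNReal.ofReal (4 * z ^ (2*γ i))) :=
    eventually_all.2 (fun i => potter U i (γ i) (hγ i) (b i) (hb i) (hmarg i 1 one_pos))
  -- a.e. nonnegativity
  have haeU : ∀ᵐ v ∂U, ∀ j, 0 ≤ v j := by
    have h0 : ∀ᵐ v ∂U, ¬ (∃ j, v j < 0) := by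
      rw [ae_iff]
      simpa using hsupp
    filter_upwards [h0] with v hv j
    by_contra h
    exact hv ⟨j, lt_of_not_ge h⟩
  -- the main eventual bound
  have hbound : ∀ y : ℝ, ∀ᶠ t in atTop,
      (∫⁻ v in {v : Fin p → ℝ | ∃ i, y < v i}, f v ∂(rescaled U b t)) ≤ Φ y := by
    intro y
    filter_upwards [hPot, eventually_ge_atTop (1:ℝ)] with t hP ht1
    set a : ℝ≥0∞ := ENNReal.ofReal t with ha
    have hane : a ≠ 0 := by
      rw [ha]; simp [ENNReal.ofReal_eq_zero]; linarith
    have hant : a ≠ ⊤ := ENNReal.ofReal_ne_top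
    set φ : (Fin p → ℝ) → (Fin p → ℝ) := fun v i => v i / b i t with hφdef
    have hφ : Measurable φ :=
      measurable_pi_lambda _ (fun i => (measurable_pi_apply i).div_const _)
    have hSmeas : MeasurableSet {v : Fin p → ℝ | ∃ i, y < v i} := by
      have hSeq : {v : Fin p → ℝ | ∃ i, y < v i} = ⋃ i, {v : Fin p → ℝ | y < v i} := by
        ext v; simp
      rw [hSeq]
      exact MeasurableSet.iUnion
        (fun i => measurableSet_lt measurable_const (measurable_pi_apply i))
    have e1 : (∫⁻ v in {v : Fin p → ℝ | ∃ i, y < v i}, f v ∂(rescaled U b t))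
        = a⁻¹ * ∫⁻ v in φ ⁻¹' {v : Fin p → ℝ | ∃ i, y < v i}, f (φ v) ∂U := by
      rw [show rescaled U b t = a⁻¹ • Measure.map φ U from rfl, Measure.restrict_smul,
        lintegral_smul_measure, setLIntegral_map hSmeas hfmeas hφ, smul_eq_mul]
    have hpre : φ ⁻¹' {v : Fin p → ℝ | ∃ i, y < v i}
        = ⋃ i, {v : Fin p → ℝ | y < v i / b i t} := by
      ext v; simp [hφdef]
    -- bound on each A i
    have hAi : ∀ i : Fin p, (∫⁻ v in {v : Fin p → ℝ | y < v i / b i t}, f (φ v) ∂U)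
        ≤ ENNReal.ofReal (Real.exp (-(y / (2 * x i)))) * (a * K i) := by
      intro i
      have hbt : 0 < b i t := (hP i).1
      set c : ℝ≥0∞ := ENNReal.ofReal (Real.exp (-(y / (2 * x i)))) with hc
      set g : (Fin p → ℝ) → ℝ≥0∞ :=
        fun v => ENNReal.ofReal (Real.exp (-((v i / b i t) / (2 * x i)))) with hg
      have hgmeas : Measurable g := by
        apply ENNReal.measurable_ofReal.comp
        apply Real.measurable_exp.comp
        exact (((measurable_pi_apply i).div_const _).div_const _).neg
      have hAmeas : MeasurableSet {v : Fin p → ℝ | y < v i / b i t} :=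
        measurableSet_lt measurable_const ((measurable_pi_apply i).div_const _)
      -- pointwise a.e. bound on the restricted measure
      have hptwise : ∀ᵐ v ∂(U.restrict {v : Fin p → ℝ | y < v i / b i t}),
          f (φ v) ≤ c * g v := by
        filter_upwards [ae_restrict_of_ae haeU, ae_restrict_mem hAmeas] with v hv hvA
        have hterm : ∀ j, 0 ≤ (v j / b j t) / x j :=
          fun j => div_nonneg (div_nonneg (hv j) ((hP j).1).le) (hx j).le
        have hsum : (v i / b i t) / x i ≤ ∑ j, (v j / b j t) / x j :=
          Finset.single_le_sum (fun j _ => hterm j) (Finset.mem_univ i)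
        have hxI : (0:ℝ) < x i := hx i
        calc f (φ v) = ENNReal.ofReal (Real.exp (-(∑ j, (v j / b j t) / x j))) := by
              simp [hf, hφdef]
          _ ≤ ENNReal.ofReal (Real.exp (-((v i / b i t) / x i))) := by
              apply ENNReal.ofReal_le_ofReal
              apply Real.exp_le_exp.2
              linarith
          _ = ENNReal.ofReal (Real.exp (-((v i / b i t) / (2 * x i)))
                * Real.exp (-((v i / b i t) / (2 * x i)))) := by
              rw [← Real.exp_add]
              congr 1
              field_simp
              ring
          _ ≤ c * g v := by
              rw [ENNReal.ofReal_mul (Real.exp_nonneg _)]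
              apply mul_le_mul_left
              apply ENNReal.ofReal_le_ofReal
              apply Real.exp_le_exp.2
              have hy : y ≤ v i / b i t := le_of_lt hvA
              have h2x : (0:ℝ) < 2 * x i := by positivity
              exact neg_le_neg ((div_le_div_iff_of_pos_right h2x).2 hy)
      -- integral over A i bounded via g
      have step1 : (∫⁻ v in {v : Fin p → ℝ | y < v i / b i t}, f (φ v) ∂U)
          ≤ c * ∫⁻ v, g v ∂U := by
        calc (∫⁻ v in {v : Fin p → ℝ | y < v i / b i t}, f (φ v) ∂U)
            ≤ ∫⁻ v in {v : Fin p → ℝ | y < v i / b i t}, c * g v ∂U :=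
              lintegral_mono_ae hptwise
          _ ≤ ∫⁻ v, c * g v ∂U := setLIntegral_le_lintegral _ _
          _ = c * ∫⁻ v, g v ∂U := lintegral_const_mul c hgmeas
      -- slab decomposition bound: ∫ g ≤ a * K i
      have step2 : (∫⁻ v, g v ∂U) ≤ a * K i := by
        set B : ℕ → Set (Fin p → ℝ) :=
          fun k => {v | b i t * k ≤ v i ∧ v i < b i t * ((k:ℝ)+1)} with hB
        have hcover : U (⋃ k, B k)ᶜ = 0 := by
          apply measure_mono_null _ hsupp
          intro v hv
          simp only [mem_compl_iff, mem_iUnion, not_exists] at hv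
          by_contra hcon
          simp only [mem_setOf_eq, not_exists, not_lt] at hcon
          have hvi : (0:ℝ) ≤ v i := hcon i
          have hnn : (0:ℝ) ≤ v i / b i t := div_nonneg hvi hbt.le
          refine hv ⌊v i / b i t⌋₊ ⟨?_, ?_⟩
          · have h1 : (⌊v i / b i t⌋₊ : ℝ) ≤ v i / b i t := Nat.floor_le hnn
            rw [mul_comm]
            exact (le_div_iff₀ hbt).1 h1
          · have h2 : v i / b i t < (⌊v i / b i t⌋₊ : ℝ) + 1 := Nat.lt_floor_add_one _
            rw [mul_comm]
            exact (div_lt_iff₀ hbt).1 h2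
        have heq2 : (∫⁻ v, g v ∂U) = ∫⁻ v in ⋃ k, B k, g v ∂U := by
          rw [← setLIntegral_univ]
          exact setLIntegral_congr ((ae_eq_univ.2 hcover).symm)
        have hslab : ∀ k : ℕ, (∫⁻ v in B k, g v ∂U)
            ≤ a * ENNReal.ofReal
              (Real.exp (-((k:ℝ) / (2 * x i))) * (4 * ((k:ℝ)+1) ^ (2 * γ i))) := by
          intro k
          have hgle : ∀ v ∈ B k, g v ≤ ENNReal.ofReal (Real.exp (-((k:ℝ) / (2 * x i)))) := by
            intro v hv
            apply ENNReal.ofReal_le_ofReal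
            apply Real.exp_le_exp.2
            apply neg_le_neg
            have hk : (k:ℝ) ≤ v i / b i t := by
              rw [le_div_iff₀ hbt, mul_comm]
              exact hv.1
            have h2x : (0:ℝ) < 2 * x i := by have := hx i; positivity
            exact (div_le_div_iff_of_pos_right h2x).2 hk
          have h1 : (∫⁻ v in B k, g v ∂U)
              ≤ ENNReal.ofReal (Real.exp (-((k:ℝ) / (2 * x i)))) * U (B k) := by
            calc (∫⁻ v in B k, g v ∂U)
                ≤ ∫⁻ _ in B k, ENNReal.ofReal (Real.exp (-((k:ℝ) / (2 * x i)))) ∂U :=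
                  setLIntegral_mono measurable_const hgle
              _ = ENNReal.ofReal (Real.exp (-((k:ℝ) / (2 * x i)))) * U (B k) :=
                  setLIntegral_const _ _
          have h2 : U (B k) ≤ a * ENNReal.ofReal (4 * ((k:ℝ)+1) ^ (2 * γ i)) := by
            calc U (B k) ≤ U {v | v i ≤ b i t * ((k:ℝ)+1)} :=
                  measure_mono (fun v hv => le_of_lt hv.2)
              _ ≤ a * ENNReal.ofReal (4 * ((k:ℝ)+1) ^ (2 * γ i)) :=
                  (hP i).2 ((k:ℝ)+1) (by linarith [Nat.cast_nonneg (α := ℝ) k])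
          calc (∫⁻ v in B k, g v ∂U)
              ≤ ENNReal.ofReal (Real.exp (-((k:ℝ) / (2 * x i))))
                * (a * ENNReal.ofReal (4 * ((k:ℝ)+1) ^ (2 * γ i))) := by
                refine le_trans h1 ?_
                exact mul_le_mul_right h2 _
            _ = a * ENNReal.ofReal
                (Real.exp (-((k:ℝ) / (2 * x i))) * (4 * ((k:ℝ)+1) ^ (2 * γ i))) := by
                rw [ENNReal.ofReal_mul (Real.exp_nonneg _)]
                ring
        calc (∫⁻ v, g v ∂U) = ∫⁻ v in ⋃ k, B k, g v ∂U := heq2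
          _ ≤ ∑' k, ∫⁻ v in B k, g v ∂U := lintegral_iUnion_le _ _
          _ ≤ ∑' k : ℕ, a * ENNReal.ofReal
              (Real.exp (-((k:ℝ) / (2 * x i))) * (4 * ((k:ℝ)+1) ^ (2 * γ i))) :=
              ENNReal.tsum_le_tsum hslab
          _ = a * K i := by rw [ENNReal.tsum_mul_left]
      calc (∫⁻ v in {v : Fin p → ℝ | y < v i / b i t}, f (φ v) ∂U)
          ≤ c * ∫⁻ v, g v ∂U := step1
        _ ≤ c * (a * K i) := mul_le_mul_right step2 _
    -- assemble
    rw [e1, hpre]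
    calc a⁻¹ * ∫⁻ v in ⋃ i, {v : Fin p → ℝ | y < v i / b i t}, f (φ v) ∂U
        ≤ a⁻¹ * ∑' i : Fin p, ∫⁻ v in {v : Fin p → ℝ | y < v i / b i t}, f (φ v) ∂U :=
          mul_le_mul_right (lintegral_iUnion_le _ _) _
      _ = a⁻¹ * ∑ i : Fin p, ∫⁻ v in {v : Fin p → ℝ | y < v i / b i t}, f (φ v) ∂U := by
          rw [tsum_fintype]
      _ ≤ a⁻¹ * ∑ i : Fin p, ENNReal.ofReal (Real.exp (-(y / (2 * x i)))) * (a * K i) := by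
          apply mul_le_mul_right
          exact Finset.sum_le_sum (fun i _ => hAi i)
      _ = ∑ i : Fin p, a⁻¹ * (ENNReal.ofReal (Real.exp (-(y / (2 * x i)))) * (a * K i)) := by
          rw [Finset.mul_sum]
      _ = Φ y := by
          rw [hΦ]
          apply Finset.sum_congr rfl
          intro i _
          rw [show a⁻¹ * (ENNReal.ofReal (Real.exp (-(y / (2 * x i)))) * (a * K i))
            = (a⁻¹ * a) * (ENNReal.ofReal (Real.exp (-(y / (2 * x i)))) * K i) by ring,
            ENNReal.inv_mul_cancel hane hant, one_mul]
  -- conclude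
  have hlim : ∀ y : ℝ, Filter.limsup
      (fun t => ∫⁻ v in {v : Fin p → ℝ | ∃ i, y < v i}, f v ∂(rescaled U b t)) atTop ≤ Φ y :=
    fun y => limsup_le_of_le (by isBoundedDefault) (hbound y)
  exact tendsto_of_tendsto_of_tendsto_of_le_of_le tendsto_const_nhds hΦ0
    (fun y => zero_le) hlim
end

section
/- For λ₁, λ₂ > 0 and parameters c₁ > 0, a > 0, δin > 0, δout > 0, integer k ≥ 1, the Fubini-type identity holds: c₁⁻¹∏_{i=1}^k(δin+i) ∫₀^∞ z^{k-1-1/c₁}(1+zλ₁)^{-(δin+k+1)}(1+z^aλ₂)^{-δout} dz = ∫_{(0,∞)²} e^{-(λ₁v₁+λ₂v₂)} f_{1,k}(v₁,v₂) dv₁ dv₂, where f_{1,k}(x,y) = c₁⁻¹(Γ(δin+1)Γ(δout))⁻¹ x^{δin+k} y^{δout-1} ∫₀^∞ z^{-(2+1/c₁+δin+aδout)} e^{-(x/z+y/z^a)} dz. -/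
open MeasureTheory Set

lemma gamma_prod {s : ℝ} (hs : 0 < s) (k : ℕ) :
    Real.Gamma (s + k) = Real.Gamma s * ∏ i ∈ Finset.range k, (s + i) := by
  induction k with
  | zero => simp
  | succ n ih =>
      have h1 : (s : ℝ) + (n + 1 : ℕ) = (s + n) + 1 := by push_cast; ring
      rw [h1, Real.Gamma_add_one (by positivity), ih, Finset.prod_range_succ]
      ring

lemma lint_gamma {t b : ℝ} (ht : -1 < t) (hb : 0 < b) :
    ∫⁻ x in Ioi (0:ℝ), ENNReal.ofReal (x ^ t * Real.exp (-(b * x))) =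
      ENNReal.ofReal ((1 / b) ^ (t + 1) * Real.Gamma (t + 1)) := by
  have hint : IntegrableOn (fun x : ℝ => x ^ t * Real.exp (-(b * x))) (Ioi 0) := by
    have := integrableOn_rpow_mul_exp_neg_mul_rpow (s := t) (p := 1) ht zero_lt_one hb
    refine this.congr_fun (fun x hx => ?_) measurableSet_Ioi
    beta_reduce; rw [Real.rpow_one]; ring_nf
  rw [← ofReal_integral_eq_lintegral_ofReal hint ?nn]
  case nn =>
    filter_upwards [ae_restrict_mem measurableSet_Ioi] with x hx
    have : (0:ℝ) < x := hx
    positivity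
  congr 1
  have := Real.integral_rpow_mul_exp_neg_mul_Ioi (a := t + 1) (r := b) (by linarith) hb
  simpa [add_sub_cancel_right] using this

lemma intz {A a x y : ℝ} (hA : A < -1) (hx : 0 < x) (hy : 0 ≤ y) :
    IntegrableOn (fun z : ℝ => z ^ A * Real.exp (-(x / z + y / z ^ a))) (Ioi 0) := by
  set f : ℝ → ℝ := fun z => z ^ A * Real.exp (-(x / z + y / z ^ a)) with hf
  have hiff := integrableOn_Ioi_comp_rpow_iff' f (p := (-1:ℝ)) (by norm_num)
  refine hiff.mp ?_
  have hbound : IntegrableOn (fun u : ℝ => u ^ (-A - 2) * Real.exp (-(x * u))) (Ioi 0) := by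
    have := integrableOn_rpow_mul_exp_neg_mul_rpow (s := -A - 2) (p := 1) (by linarith) zero_lt_one hx
    refine this.congr_fun (fun u hu => ?_) measurableSet_Ioi
    beta_reduce; rw [Real.rpow_one]; ring_nf
  refine Integrable.mono' hbound ?_ ?_
  · apply Measurable.aestronglyMeasurable
    apply Measurable.smul (f := fun x : ℝ => x ^ ((-1:ℝ) - 1)) (g := fun x : ℝ => f (x ^ (-1:ℝ)))
    · fun_prop
    · apply Measurable.mul
      · fun_prop
      · apply Real.measurable_exp.comp
        apply Measurable.neg
        apply Measurable.add
        · fun_prop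
        · exact measurable_const.div (by fun_prop)
  · filter_upwards [ae_restrict_mem measurableSet_Ioi] with u hu
    have hu0 : (0:ℝ) < u := hu
    have key : u ^ ((-1:ℝ) - 1) • f (u ^ (-1:ℝ)) =
        u ^ (-A - 2) * Real.exp (-(x * u + y * u ^ a)) := by
      rw [smul_eq_mul, hf]
      simp only [Real.rpow_neg_one]
      rw [Real.inv_rpow hu0.le A, Real.inv_rpow hu0.le a, ← Real.rpow_neg hu0.le A,
        div_inv_eq_mul, div_inv_eq_mul]
      rw [← mul_assoc, ← Real.rpow_add hu0]
      norm_num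
      ring_nf
    rw [key, Real.norm_eq_abs, abs_of_nonneg (by positivity)]
    apply mul_le_mul_of_nonneg_left _ (by positivity)
    apply Real.exp_le_exp.mpr
    nlinarith [mul_nonneg hy (Real.rpow_nonneg hu0.le a)]

lemma key_real {c₁ a δin δout lam₁ lam₂ : ℝ} (k : ℕ)
    (hlam₁ : 0 < lam₁) (hlam₂ : 0 < lam₂)
    {z : ℝ} (hz : 0 < z) :
    z ^ (-(2 + 1 / c₁ + δin + a * δout)) *
        ((1 / (lam₁ + 1 / z)) ^ (δin + (k : ℝ) + 1) * (1 / (lam₂ + 1 / z ^ a)) ^ δout) =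
      z ^ ((k : ℝ) - 1 - 1 / c₁) * (1 + z * lam₁) ^ (-(δin + (k : ℝ) + 1)) *
        (1 + z ^ a * lam₂) ^ (-δout) := by
  have hza : (0:ℝ) < z ^ a := Real.rpow_pos_of_pos hz a
  have w1 : (0:ℝ) < 1 + z * lam₁ := by positivity
  have w2 : (0:ℝ) < 1 + z ^ a * lam₂ := by positivity
  have e1 : 1 / (lam₁ + 1 / z) = z / (1 + z * lam₁) := by
    rw [div_eq_div_iff (by positivity) w1.ne']; field_simp; ring
  have e2 : 1 / (lam₂ + 1 / z ^ a) = z ^ a / (1 + z ^ a * lam₂) := by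
    rw [div_eq_div_iff (by positivity) w2.ne']; field_simp; ring
  have r1 : (z / (1 + z * lam₁)) ^ (δin + (k:ℝ) + 1) =
      z ^ (δin + (k:ℝ) + 1) * (1 + z * lam₁) ^ (-(δin + (k:ℝ) + 1)) := by
    rw [Real.div_rpow hz.le w1.le, Real.rpow_neg w1.le, div_eq_mul_inv]
  have r2 : (z ^ a / (1 + z ^ a * lam₂)) ^ δout =
      z ^ (a * δout) * (1 + z ^ a * lam₂) ^ (-δout) := by
    rw [Real.div_rpow hza.le w2.le, Real.rpow_neg w2.le, div_eq_mul_inv, ← Real.rpow_mul hz.le]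
  rw [e1, e2, r1, r2]
  have hzz : z ^ (-(2 + 1 / c₁ + δin + a * δout)) * (z ^ (δin + (k:ℝ) + 1) * z ^ (a * δout)) =
      z ^ ((k:ℝ) - 1 - 1 / c₁) := by
    rw [← Real.rpow_add hz, ← Real.rpow_add hz]; ring_nf
  linear_combination ((1 + z * lam₁) ^ (-(δin + (k:ℝ) + 1)) * (1 + z ^ a * lam₂) ^ (-δout)) * hzz


/-- The density `f_{1,k}`. -/
noncomputable def f1k (c₁ a δin δout : ℝ) (k : ℕ) (x y : ℝ) : ℝ :=
  c₁⁻¹ * (Real.Gamma (δin + 1) * Real.Gamma δout)⁻¹ * x ^ (δin + (k : ℝ)) *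
    y ^ (δout - 1) *
    ∫ z in Set.Ioi (0 : ℝ),
      z ^ (-(2 + 1 / c₁ + δin + a * δout)) * Real.exp (-(x / z + y / z ^ a))

/-- Fubini-type identity:
`c₁⁻¹ ∏_{i=1}^k (δin+i) ∫₀^∞ z^{k-1-1/c₁}(1+zλ₁)^{-(δin+k+1)}(1+z^aλ₂)^{-δout} dz`
equals `∫∫_{(0,∞)²} e^{-(λ₁v₁+λ₂v₂)} f_{1,k}(v₁,v₂) dv₁dv₂`. -/
theorem stmt17 (c₁ a δin δout lam₁ lam₂ : ℝ) (k : ℕ)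
    (hc : 0 < c₁) (ha : 0 < a) (hin : 0 < δin) (hout : 0 < δout)
    (hk : 1 ≤ k) (hkc : 1 / c₁ < k)
    (hlam₁ : 0 < lam₁) (hlam₂ : 0 < lam₂) :
    c₁⁻¹ * (∏ i ∈ Finset.range k, (δin + (i + 1))) *
        ∫ z in Set.Ioi (0 : ℝ),
          z ^ ((k : ℝ) - 1 - 1 / c₁) * (1 + z * lam₁) ^ (-(δin + k + 1)) *
            (1 + z ^ a * lam₂) ^ (-δout) =
      ∫ v in (Set.Ioi (0 : ℝ)) ×ˢ (Set.Ioi (0 : ℝ)),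
        Real.exp (-(lam₁ * v.1 + lam₂ * v.2)) * f1k c₁ a δin δout k v.1 v.2 := by
  have hΓin : 0 < Real.Gamma (δin + 1) := Real.Gamma_pos_of_pos (by linarith)
  have hΓout : 0 < Real.Gamma δout := Real.Gamma_pos_of_pos hout
  have hΓP : 0 < Real.Gamma (δin + (k:ℝ) + 1) := Real.Gamma_pos_of_pos (by positivity)
  set A : ℝ := -(2 + 1 / c₁ + δin + a * δout) with hA
  have hA1 : A < -1 := by
    have h1 : (0:ℝ) < 1 / c₁ := by positivity
    have h2 : (0:ℝ) < a * δout := by positivity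
    rw [hA]; linarith
  set C0 : ℝ := c₁⁻¹ * (Real.Gamma (δin + 1) * Real.Gamma δout)⁻¹ with hC0
  have hC0pos : 0 < C0 := by rw [hC0]; positivity
  set C : ℝ := c₁⁻¹ * ∏ i ∈ Finset.range k, (δin + (i + 1)) with hCdef
  have hCpos : 0 < C := by
    rw [hCdef]
    have : (0:ℝ) < ∏ i ∈ Finset.range k, (δin + ((i:ℝ) + 1)) :=
      Finset.prod_pos fun i _ => by positivity
    positivity
  have hΓeq : C0 * (Real.Gamma (δin + (k:ℝ) + 1) * Real.Gamma δout) = C := by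
    have h1 : Real.Gamma (δin + (k:ℝ) + 1) =
        Real.Gamma (δin + 1) * ∏ i ∈ Finset.range k, (δin + ((i:ℝ) + 1)) := by
      have h2 := gamma_prod (s := δin + 1) (by linarith) k
      rw [show δin + (k:ℝ) + 1 = (δin + 1) + k by ring, h2]
      congr 1
      refine Finset.prod_congr rfl fun i _ => by ring
    rw [h1, hC0, hCdef]
    field_simp
  -- rewriting f1k
  have hf1k : ∀ x y : ℝ, Real.exp (-(lam₁ * x + lam₂ * y)) * f1k c₁ a δin δout k x y
      = Real.exp (-(lam₁ * x + lam₂ * y)) * (C0 * x ^ (δin + (k:ℝ)) * y ^ (δout - 1) *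
        ∫ z in Ioi (0:ℝ), z ^ A * Real.exp (-(x / z + y / z ^ a))) := by
    intro x y
    unfold f1k
    rw [← hC0, ← hA]
  -- measurability
  have mh : Measurable fun q : (ℝ × ℝ) × ℝ =>
      q.2 ^ A * Real.exp (-(q.1.1 / q.2 + q.1.2 / q.2 ^ a)) := by
    apply Measurable.mul
    · fun_prop
    · apply Real.measurable_exp.comp
      apply Measurable.neg
      apply Measurable.add
      · fun_prop
      · exact Measurable.div (by fun_prop) (by fun_prop)
  have mI : StronglyMeasurable fun p : ℝ × ℝ =>
      ∫ z in Ioi (0:ℝ), z ^ A * Real.exp (-(p.1 / z + p.2 / z ^ a)) :=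
    mh.stronglyMeasurable.integral_prod_right'
  have mFsm : StronglyMeasurable (fun v : ℝ × ℝ =>
      Real.exp (-(lam₁ * v.1 + lam₂ * v.2)) * f1k c₁ a δin δout k v.1 v.2) := by
    have e : (fun v : ℝ × ℝ =>
        Real.exp (-(lam₁ * v.1 + lam₂ * v.2)) * f1k c₁ a δin δout k v.1 v.2)
        = fun v => (Real.exp (-(lam₁ * v.1 + lam₂ * v.2)) *
            (C0 * v.1 ^ (δin + (k:ℝ)) * v.2 ^ (δout - 1))) *
            ∫ z in Ioi (0:ℝ), z ^ A * Real.exp (-(v.1 / z + v.2 / z ^ a)) := by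
      funext v; rw [hf1k v.1 v.2]; ring
    rw [e]
    exact ((by fun_prop : Measurable fun v : ℝ × ℝ => Real.exp (-(lam₁ * v.1 + lam₂ * v.2)) *
      (C0 * v.1 ^ (δin + (k:ℝ)) * v.2 ^ (δout - 1))).stronglyMeasurable).mul mI
  -- RHS as lintegral
  have hRHS : (∫ v in (Ioi (0:ℝ)) ×ˢ (Ioi (0:ℝ)),
        Real.exp (-(lam₁ * v.1 + lam₂ * v.2)) * f1k c₁ a δin δout k v.1 v.2)
      = (∫⁻ v in (Ioi (0:ℝ)) ×ˢ (Ioi (0:ℝ)),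
          ENNReal.ofReal (Real.exp (-(lam₁ * v.1 + lam₂ * v.2)) *
            f1k c₁ a δin δout k v.1 v.2)).toReal := by
    rw [integral_eq_lintegral_of_nonneg_ae ?_ mFsm.aestronglyMeasurable]
    filter_upwards [ae_restrict_mem (measurableSet_Ioi.prod measurableSet_Ioi)] with v hv
    have h1 : (0:ℝ) < v.1 := hv.1
    have h2 : (0:ℝ) < v.2 := hv.2
    rw [hf1k]
    have hI : 0 ≤ ∫ z in Ioi (0:ℝ), z ^ A * Real.exp (-(v.1 / z + v.2 / z ^ a)) :=
      setIntegral_nonneg measurableSet_Ioi fun z hz => by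
        have hz0 : (0:ℝ) < z := hz
        positivity
    positivity
  -- the main lintegral computation
  have hmeasEq : (volume : Measure (ℝ × ℝ)).restrict ((Ioi (0:ℝ)) ×ˢ (Ioi (0:ℝ)))
      = (volume.restrict (Ioi (0:ℝ))).prod (volume.restrict (Ioi (0:ℝ))) := by
    rw [Measure.volume_eq_prod, ← Measure.prod_restrict]
  have hM : (∫⁻ v in (Ioi (0:ℝ)) ×ˢ (Ioi (0:ℝ)),
        ENNReal.ofReal (Real.exp (-(lam₁ * v.1 + lam₂ * v.2)) *
          f1k c₁ a δin δout k v.1 v.2))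
      = ENNReal.ofReal C * ∫⁻ z in Ioi (0:ℝ),
          ENNReal.ofReal (z ^ ((k:ℝ) - 1 - 1 / c₁) * (1 + z * lam₁) ^ (-(δin + (k:ℝ) + 1)) *
            (1 + z ^ a * lam₂) ^ (-δout)) := by
    have hmf : Measurable (fun v : ℝ × ℝ => ENNReal.ofReal
        (Real.exp (-(lam₁ * v.1 + lam₂ * v.2)) * f1k c₁ a δin δout k v.1 v.2)) :=
      ENNReal.measurable_ofReal.comp mFsm.measurable
    rw [hmeasEq, lintegral_prod _ hmf.aemeasurable]
    calc
      (∫⁻ x in Ioi (0:ℝ), ∫⁻ y in Ioi (0:ℝ),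
          ENNReal.ofReal (Real.exp (-(lam₁ * x + lam₂ * y)) * f1k c₁ a δin δout k x y))
        = ∫⁻ x in Ioi (0:ℝ), ∫⁻ y in Ioi (0:ℝ), ∫⁻ z in Ioi (0:ℝ),
            ENNReal.ofReal (C0 * (x ^ (δin + (k:ℝ)) * Real.exp (-((lam₁ + 1 / z) * x)) *
              (y ^ (δout - 1) * Real.exp (-((lam₂ + 1 / z ^ a) * y))) * z ^ A)) := by
          refine setLIntegral_congr_fun measurableSet_Ioi (fun x hx => ?_)
          refine setLIntegral_congr_fun measurableSet_Ioi (fun y hy => ?_)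
          have hx0 : (0:ℝ) < x := hx
          have hy0 : (0:ℝ) < y := hy
          rw [hf1k]
          have hD : 0 ≤ Real.exp (-(lam₁ * x + lam₂ * y)) *
              (C0 * x ^ (δin + (k:ℝ)) * y ^ (δout - 1)) := by positivity
          rw [show Real.exp (-(lam₁ * x + lam₂ * y)) * (C0 * x ^ (δin + (k:ℝ)) *
                y ^ (δout - 1) * ∫ z in Ioi (0:ℝ), z ^ A * Real.exp (-(x / z + y / z ^ a)))
              = (Real.exp (-(lam₁ * x + lam₂ * y)) * (C0 * x ^ (δin + (k:ℝ)) * y ^ (δout - 1))) *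
                ∫ z in Ioi (0:ℝ), z ^ A * Real.exp (-(x / z + y / z ^ a)) from by ring]
          have hnn : 0 ≤ᵐ[volume.restrict (Ioi 0)]
              fun z : ℝ => z ^ A * Real.exp (-(x / z + y / z ^ a)) := by
            filter_upwards [ae_restrict_mem measurableSet_Ioi] with z hz
            have hz0 : (0:ℝ) < z := hz
            positivity
          rw [ENNReal.ofReal_mul hD,
            ofReal_integral_eq_lintegral_ofReal (intz hA1 hx0 hy0.le) hnn]
          rw [← lintegral_const_mul' _ _ ENNReal.ofReal_ne_top]
          refine setLIntegral_congr_fun measurableSet_Ioi (fun z hz => ?_)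
          have hz0 : (0:ℝ) < z := hz
          rw [← ENNReal.ofReal_mul hD]
          congr 1
          have eexp : Real.exp (-(lam₁ * x + lam₂ * y)) * Real.exp (-(x / z + y / z ^ a))
              = Real.exp (-((lam₁ + 1 / z) * x)) * Real.exp (-((lam₂ + 1 / z ^ a) * y)) := by
            rw [← Real.exp_add, ← Real.exp_add]
            congr 1
            have hza : (0:ℝ) < z ^ a := Real.rpow_pos_of_pos hz0 a
            field_simp
            ring
          linear_combination (C0 * x ^ (δin + (k:ℝ)) * y ^ (δout - 1) * z ^ A) * eexp
      _ = ∫⁻ x in Ioi (0:ℝ), ∫⁻ z in Ioi (0:ℝ), ∫⁻ y in Ioi (0:ℝ),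
            ENNReal.ofReal (C0 * (x ^ (δin + (k:ℝ)) * Real.exp (-((lam₁ + 1 / z) * x)) *
              (y ^ (δout - 1) * Real.exp (-((lam₂ + 1 / z ^ a) * y))) * z ^ A)) := by
          refine setLIntegral_congr_fun measurableSet_Ioi (fun x hx => ?_)
          refine lintegral_lintegral_swap ?_
          apply Measurable.aemeasurable
          apply ENNReal.measurable_ofReal.comp
          apply Measurable.const_mul
          apply Measurable.mul
          apply Measurable.mul
          · fun_prop
          · apply Measurable.mul
            · fun_prop
            · apply Real.measurable_exp.comp
              apply Measurable.neg
              apply Measurable.mul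
              · apply Measurable.add measurable_const
                exact Measurable.div measurable_const (by fun_prop)
              · fun_prop
          · fun_prop
      _ = ∫⁻ x in Ioi (0:ℝ), ∫⁻ z in Ioi (0:ℝ),
            ENNReal.ofReal (C0 * (x ^ (δin + (k:ℝ)) * Real.exp (-((lam₁ + 1 / z) * x))) * z ^ A *
              ((1 / (lam₂ + 1 / z ^ a)) ^ δout * Real.Gamma δout)) := by
          refine setLIntegral_congr_fun measurableSet_Ioi (fun x hx => ?_)
          refine setLIntegral_congr_fun measurableSet_Ioi (fun z hz => ?_)
          have hx0 : (0:ℝ) < x := hx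
          have hz0 : (0:ℝ) < z := hz
          have hza : (0:ℝ) < z ^ a := Real.rpow_pos_of_pos hz0 a
          have hb2 : (0:ℝ) < lam₂ + 1 / z ^ a := by positivity
          have hc2 : 0 ≤ C0 * (x ^ (δin + (k:ℝ)) * Real.exp (-((lam₁ + 1 / z) * x))) * z ^ A := by
            positivity
          calc
            (∫⁻ y in Ioi (0:ℝ), ENNReal.ofReal (C0 * (x ^ (δin + (k:ℝ)) *
                Real.exp (-((lam₁ + 1 / z) * x)) *
                (y ^ (δout - 1) * Real.exp (-((lam₂ + 1 / z ^ a) * y))) * z ^ A)))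
              = ∫⁻ y in Ioi (0:ℝ), ENNReal.ofReal (C0 * (x ^ (δin + (k:ℝ)) *
                  Real.exp (-((lam₁ + 1 / z) * x))) * z ^ A) *
                  ENNReal.ofReal (y ^ (δout - 1) * Real.exp (-((lam₂ + 1 / z ^ a) * y))) := by
                refine setLIntegral_congr_fun measurableSet_Ioi (fun y hy => ?_)
                rw [← ENNReal.ofReal_mul hc2]
                congr 1
                ring
            _ = ENNReal.ofReal (C0 * (x ^ (δin + (k:ℝ)) * Real.exp (-((lam₁ + 1 / z) * x))) *
                  z ^ A) * ∫⁻ y in Ioi (0:ℝ),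
                  ENNReal.ofReal (y ^ (δout - 1) * Real.exp (-((lam₂ + 1 / z ^ a) * y))) :=
                lintegral_const_mul' _ _ ENNReal.ofReal_ne_top
            _ = ENNReal.ofReal (C0 * (x ^ (δin + (k:ℝ)) * Real.exp (-((lam₁ + 1 / z) * x))) *
                  z ^ A) * ENNReal.ofReal ((1 / (lam₂ + 1 / z ^ a)) ^ δout *
                    Real.Gamma δout) := by
                rw [lint_gamma (by linarith) hb2, sub_add_cancel]
            _ = ENNReal.ofReal (C0 * (x ^ (δin + (k:ℝ)) * Real.exp (-((lam₁ + 1 / z) * x))) *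
                  z ^ A * ((1 / (lam₂ + 1 / z ^ a)) ^ δout * Real.Gamma δout)) := by
                rw [← ENNReal.ofReal_mul hc2]
      _ = ∫⁻ z in Ioi (0:ℝ), ∫⁻ x in Ioi (0:ℝ),
            ENNReal.ofReal (C0 * (x ^ (δin + (k:ℝ)) * Real.exp (-((lam₁ + 1 / z) * x))) * z ^ A *
              ((1 / (lam₂ + 1 / z ^ a)) ^ δout * Real.Gamma δout)) := by
          refine lintegral_lintegral_swap ?_
          apply Measurable.aemeasurable
          apply ENNReal.measurable_ofReal.comp
          apply Measurable.mul
          apply Measurable.mul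
          · apply Measurable.const_mul
            apply Measurable.mul
            · fun_prop
            · apply Real.measurable_exp.comp
              apply Measurable.neg
              apply Measurable.mul
              · apply Measurable.add measurable_const
                exact Measurable.div measurable_const (by fun_prop)
              · fun_prop
          · fun_prop
          · fun_prop
      _ = ∫⁻ z in Ioi (0:ℝ),
            ENNReal.ofReal (C0 * z ^ A * ((1 / (lam₂ + 1 / z ^ a)) ^ δout * Real.Gamma δout) *
              ((1 / (lam₁ + 1 / z)) ^ (δin + (k:ℝ) + 1) * Real.Gamma (δin + (k:ℝ) + 1))) := by
          refine setLIntegral_congr_fun measurableSet_Ioi (fun z hz => ?_)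
          have hz0 : (0:ℝ) < z := hz
          have hza : (0:ℝ) < z ^ a := Real.rpow_pos_of_pos hz0 a
          have hb1 : (0:ℝ) < lam₁ + 1 / z := by positivity
          have hb2 : (0:ℝ) < lam₂ + 1 / z ^ a := by positivity
          have hc3 : 0 ≤ C0 * z ^ A * ((1 / (lam₂ + 1 / z ^ a)) ^ δout * Real.Gamma δout) := by
            positivity
          calc
            (∫⁻ x in Ioi (0:ℝ), ENNReal.ofReal (C0 * (x ^ (δin + (k:ℝ)) *
                Real.exp (-((lam₁ + 1 / z) * x))) * z ^ A *
                ((1 / (lam₂ + 1 / z ^ a)) ^ δout * Real.Gamma δout)))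
              = ∫⁻ x in Ioi (0:ℝ), ENNReal.ofReal (C0 * z ^ A *
                  ((1 / (lam₂ + 1 / z ^ a)) ^ δout * Real.Gamma δout)) *
                  ENNReal.ofReal (x ^ (δin + (k:ℝ)) * Real.exp (-((lam₁ + 1 / z) * x))) := by
                refine setLIntegral_congr_fun measurableSet_Ioi (fun x hx => ?_)
                rw [← ENNReal.ofReal_mul hc3]
                congr 1
                ring
            _ = ENNReal.ofReal (C0 * z ^ A * ((1 / (lam₂ + 1 / z ^ a)) ^ δout *
                  Real.Gamma δout)) * ∫⁻ x in Ioi (0:ℝ),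
                  ENNReal.ofReal (x ^ (δin + (k:ℝ)) * Real.exp (-((lam₁ + 1 / z) * x))) :=
                lintegral_const_mul' _ _ ENNReal.ofReal_ne_top
            _ = ENNReal.ofReal (C0 * z ^ A * ((1 / (lam₂ + 1 / z ^ a)) ^ δout *
                  Real.Gamma δout)) * ENNReal.ofReal ((1 / (lam₁ + 1 / z)) ^ (δin + (k:ℝ) + 1) *
                    Real.Gamma (δin + (k:ℝ) + 1)) := by
                rw [lint_gamma (neg_one_lt_zero.trans (by positivity)) hb1]
            _ = ENNReal.ofReal (C0 * z ^ A * ((1 / (lam₂ + 1 / z ^ a)) ^ δout * Real.Gamma δout) *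
                  ((1 / (lam₁ + 1 / z)) ^ (δin + (k:ℝ) + 1) * Real.Gamma (δin + (k:ℝ) + 1))) := by
                rw [← ENNReal.ofReal_mul hc3]
      _ = ENNReal.ofReal C * ∫⁻ z in Ioi (0:ℝ),
            ENNReal.ofReal (z ^ ((k:ℝ) - 1 - 1 / c₁) * (1 + z * lam₁) ^ (-(δin + (k:ℝ) + 1)) *
              (1 + z ^ a * lam₂) ^ (-δout)) := by
          rw [← lintegral_const_mul' _ _ ENNReal.ofReal_ne_top]
          refine setLIntegral_congr_fun measurableSet_Ioi (fun z hz => ?_)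
          have hz0 : (0:ℝ) < z := hz
          rw [← ENNReal.ofReal_mul hCpos.le]
          congr 1
          have hkey := key_real (c₁ := c₁) (a := a) (δin := δin) (δout := δout) k
            hlam₁ hlam₂ hz0
          rw [← hA] at hkey
          linear_combination (C0 * Real.Gamma δout * Real.Gamma (δin + (k:ℝ) + 1)) * hkey +
            (z ^ ((k:ℝ) - 1 - 1 / c₁) * (1 + z * lam₁) ^ (-(δin + (k:ℝ) + 1)) *
              (1 + z ^ a * lam₂) ^ (-δout)) * hΓeq
  -- LHS as lintegral
  have hLHS : (∫ z in Ioi (0:ℝ), z ^ ((k:ℝ) - 1 - 1 / c₁) * (1 + z * lam₁) ^ (-(δin + (k:ℝ) + 1)) *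
        (1 + z ^ a * lam₂) ^ (-δout))
      = (∫⁻ z in Ioi (0:ℝ), ENNReal.ofReal (z ^ ((k:ℝ) - 1 - 1 / c₁) *
          (1 + z * lam₁) ^ (-(δin + (k:ℝ) + 1)) * (1 + z ^ a * lam₂) ^ (-δout))).toReal := by
    rw [integral_eq_lintegral_of_nonneg_ae ?_ ?_]
    · filter_upwards [ae_restrict_mem measurableSet_Ioi] with z hz
      have hz0 : (0:ℝ) < z := hz
      have hza : (0:ℝ) < z ^ a := Real.rpow_pos_of_pos hz0 a
      positivity
    · apply Measurable.aestronglyMeasurable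
      fun_prop
  rw [mul_assoc, hLHS, hRHS, hM, ENNReal.toReal_mul, ENNReal.toReal_ofReal hCpos.le, hCdef]
  ring
end

section
/- Let (X₁, Y₁) be a nonnegative integer-valued random vector whose probability generating function is φ₁(x,y) = c₁⁻¹∫₁^∞ z^{-(1+1/c₁)}(x+(1-x)z)^{-(δin+1)}(y+(1-y)z^a)^{-δout} dz with δin, δout > 0, c₁ = 1/(αin-1), a = (αin-1)/(αout-1). If k > αin - 1 is an integer, then E[X₁^k] = ∞. -/
open MeasureTheory Set
open scoped ENNReal

noncomputable def phi1 (c₁ a δin δout : ℝ) (x y : ℝ) : ℝ :=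
  c₁⁻¹ * ∫ z in Set.Ioi (1 : ℝ),
    z ^ (-(1 + 1 / c₁)) * (x + (1 - x) * z) ^ (-(δin + 1)) *
      (y + (1 - y) * z ^ a) ^ (-δout)

namespace Stmt18Aux



/-- forward difference with step `h` -/
def fdiff (h : ℝ) (f : ℝ → ℝ) : ℝ → ℝ := fun x => f (x + h) - f x

lemma fdiff_iter_congr (h : ℝ) (hh : 0 < h) :
    ∀ (m : ℕ) (f₁ f₂ : ℝ → ℝ) (x : ℝ),
      (∀ t ∈ Icc x (x + m * h), f₁ t = f₂ t) →
      (fdiff h)^[m] f₁ x = (fdiff h)^[m] f₂ x := by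
  intro m
  induction m with
  | zero =>
    intro f₁ f₂ x he
    simpa using he x (by constructor <;> simp)
  | succ m ih =>
    intro f₁ f₂ x he
    rw [Function.iterate_succ_apply, Function.iterate_succ_apply]
    apply ih
    intro t ht
    obtain ⟨ht1, ht2⟩ := ht
    have hm : (m : ℝ) ≥ 0 := Nat.cast_nonneg m
    have hc : ((m+1 : ℕ) : ℝ) = (m : ℝ) + 1 := by push_cast; ring
    simp only [fdiff]
    rw [he t ⟨ht1, by rw [hc]; nlinarith⟩, he (t+h) ⟨by linarith, by rw [hc]; nlinarith⟩]

lemma fdiff_iter_neg (h : ℝ) :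
    ∀ (m : ℕ) (f : ℝ → ℝ) (x : ℝ),
      (fdiff h)^[m] (fun t => -(f t)) x = -((fdiff h)^[m] f x) := by
  intro m
  induction m with
  | zero => intro f x; simp
  | succ m ih =>
    intro f x
    rw [Function.iterate_succ_apply, Function.iterate_succ_apply]
    have : fdiff h (fun t => -(f t)) = fun t => -((fdiff h f) t) := by
      funext t; simp [fdiff]; ring
    rw [this, ih]

lemma fdiff_iter_const_mul (h c : ℝ) :
    ∀ (m : ℕ) (f : ℝ → ℝ) (x : ℝ),
      (fdiff h)^[m] (fun t => c * f t) x = c * ((fdiff h)^[m] f x) := by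
  intro m
  induction m with
  | zero => intro f x; simp
  | succ m ih =>
    intro f x
    rw [Function.iterate_succ_apply, Function.iterate_succ_apply]
    have : fdiff h (fun t => c * f t) = fun t => c * ((fdiff h f) t) := by
      funext t; simp [fdiff]; ring
    rw [this, ih]

lemma fdiff_iter_le (h : ℝ) (hh : 0 < h) :
    ∀ (m : ℕ) (f : ℕ → ℝ → ℝ) (x B : ℝ),
      (∀ i < m, ∀ t ∈ Icc x (x + m * h), HasDerivAt (f i) (f (i+1) t) t) →
      (∀ t ∈ Icc x (x + m * h), f m t ≤ B) →
      (fdiff h)^[m] (f 0) x ≤ B * h ^ m := by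
  intro m
  induction m with
  | zero =>
    intro f x B _ hbound
    simpa using hbound x (by constructor <;> simp)
  | succ m ih =>
    intro f x B hchain hbound
    have hc : ((m+1 : ℕ) : ℝ) * h = (m : ℝ) * h + h := by push_cast; ring
    have hmem : ∀ t ∈ Icc x (x + (m:ℝ) * h), t ∈ Icc x (x + ((m+1:ℕ)) * h) ∧
        t + h ∈ Icc x (x + ((m+1:ℕ)) * h) := by
      intro t ⟨ht1, ht2⟩
      refine ⟨⟨ht1, by rw [hc]; linarith⟩, ⟨by linarith, by rw [hc]; linarith⟩⟩
    rw [Function.iterate_succ_apply]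
    have hfd : fdiff h (f 0) = (fun i t => f i (t + h) - f i t) 0 := rfl
    rw [hfd]
    refine (ih (fun i t => f i (t + h) - f i t) x (B * h) ?_ ?_).trans_eq (by ring)
    · -- derivative chain for the differenced family
      intro i hi t ht
      have h1 : HasDerivAt (fun t => f i (t + h)) (f (i+1) (t+h)) t := by
        have := hchain i (Nat.lt_succ_of_lt hi) (t+h) (hmem t ht).2
        exact this.comp_add_const t h
      exact h1.sub (hchain i (Nat.lt_succ_of_lt hi) t (hmem t ht).1)
    · -- bound via MVT
      intro t ht
      have hsub : Icc t (t+h) ⊆ Icc x (x + ((m+1:ℕ)) * h) := by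
        intro u hu
        obtain ⟨ht1, ht2⟩ := ht
        exact ⟨le_trans ht1 hu.1, le_trans hu.2 (by rw [hc]; linarith)⟩
      have hderiv : ∀ u ∈ Icc t (t+h), HasDerivAt (f m) (f (m+1) u) u := fun u hu =>
        hchain m (Nat.lt_succ_self m) u (hsub hu)
      have hcont : ContinuousOn (f m) (Icc t (t+h)) := fun u hu =>
        (hderiv u hu).continuousAt.continuousWithinAt
      obtain ⟨ξ, hξ, hslope⟩ := exists_hasDerivAt_eq_slope (f m) (f (m+1))
        (by linarith : t < t + h) hcont
        (fun u hu => hderiv u (Ioo_subset_Icc_self hu))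
      have hξmem : ξ ∈ Icc x (x + ((m+1:ℕ)) * h) := hsub (Ioo_subset_Icc_self hξ)
      have hB := hbound ξ hξmem
      have heq : f m (t + h) - f m t = f (m+1) ξ * h := by
        field_simp at hslope
        rw [hslope, add_sub_cancel_left, div_mul_cancel₀ _ hh.ne']
      show f m (t + h) - f m t ≤ B * h
      rw [heq]
      exact mul_le_mul_of_nonneg_right hB hh.le

lemma fdiff_iter_ge (h : ℝ) (hh : 0 < h)
    (m : ℕ) (f : ℕ → ℝ → ℝ) (x A : ℝ)
    (hchain : ∀ i < m, ∀ t ∈ Icc x (x + m * h), HasDerivAt (f i) (f (i+1) t) t)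
    (hbound : ∀ t ∈ Icc x (x + m * h), A ≤ f m t) :
    A * h ^ m ≤ (fdiff h)^[m] (f 0) x := by
  have := fdiff_iter_le h hh m (fun i t => -(f i t)) x (-A)
    (fun i hi t ht => (hchain i hi t ht).neg)
    (fun t ht => neg_le_neg (hbound t ht))
  have hneg : (fdiff h)^[m] (fun t => -(f 0 t)) x = -((fdiff h)^[m] (f 0) x) :=
    fdiff_iter_neg h m (f 0) x
  rw [hneg] at this
  nlinarith [this]

/-- bounds for iterated differences of monomials -/
lemma pow_fdiff_bounds (h : ℝ) (hh : 0 < h) (n k : ℕ) (x : ℝ)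
    (hx : 0 ≤ x) (hxk : x + k * h ≤ 1) :
    0 ≤ (fdiff h)^[k] (fun t => t ^ n) x ∧
      (fdiff h)^[k] (fun t => t ^ n) x ≤ (n : ℝ) ^ k * h ^ k := by
  set f : ℕ → ℝ → ℝ := fun i t => (n.descFactorial i : ℝ) * t ^ (n - i) with hf
  have hcongr : (fdiff h)^[k] (fun t => t ^ n) x = (fdiff h)^[k] (f 0) x := by
    apply fdiff_iter_congr h hh
    intro t _
    simp [hf]
  have hchain : ∀ i < k, ∀ t ∈ Icc x (x + k * h), HasDerivAt (f i) (f (i+1) t) t := by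
    intro i _ t _
    have h1 : HasDerivAt (fun t : ℝ => t ^ (n - i)) (((n - i : ℕ) : ℝ) * t ^ (n - i - 1)) t :=
      hasDerivAt_pow (n - i) t
    have h2 := h1.const_mul ((n.descFactorial i : ℝ))
    have h3 : (n.descFactorial i : ℝ) * (((n - i : ℕ) : ℝ) * t ^ (n - i - 1)) =
        (n.descFactorial (i+1) : ℝ) * t ^ (n - (i+1)) := by
      rw [Nat.descFactorial_succ, Nat.sub_sub]
      push_cast
      ring
    rw [h3] at h2
    exact h2
  have hIcc : ∀ t ∈ Icc x (x + k * h), 0 ≤ t ∧ t ≤ 1 := fun t ht =>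
    ⟨le_trans hx ht.1, le_trans ht.2 hxk⟩
  constructor
  · rw [hcongr]
    have := fdiff_iter_ge h hh k f x 0 hchain (fun t ht =>
      mul_nonneg (Nat.cast_nonneg _) (pow_nonneg (hIcc t ht).1 _))
    simpa using this
  · rw [hcongr]
    apply fdiff_iter_le h hh k f x ((n : ℝ) ^ k) hchain
    intro t ht
    have h1 : t ^ (n - k) ≤ 1 := pow_le_one₀ (hIcc t ht).1 (hIcc t ht).2
    have h2 : (n.descFactorial k : ℝ) ≤ (n : ℝ) ^ k := by
      exact_mod_cast Nat.descFactorial_le_pow n k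
    calc (n.descFactorial k : ℝ) * t ^ (n - k) ≤ (n.descFactorial k : ℝ) * 1 :=
          mul_le_mul_of_nonneg_left h1 (Nat.cast_nonneg _)
      _ ≤ (n : ℝ) ^ k := by simpa using h2

/-- iterated differences commute with integrals -/
lemma integral_fdiff_iter {α : Type*} [MeasurableSpace α] (ν : Measure α) (h : ℝ)
    (g : α → ℝ → ℝ) :
    ∀ (m : ℕ) (x : ℝ), (∀ j : ℕ, j ≤ m → Integrable (fun a => g a (x + j * h)) ν) →
      Integrable (fun a => (fdiff h)^[m] (g a) x) ν ∧
      (fdiff h)^[m] (fun x => ∫ a, g a x ∂ν) x = ∫ a, (fdiff h)^[m] (g a) x ∂ν := by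
  intro m
  induction m with
  | zero =>
    intro x hint
    refine ⟨?_, by simp⟩
    simpa using hint 0 le_rfl
  | succ m ih =>
    intro x hint
    have I1 := ih x (fun j hj => hint j (Nat.le_succ_of_le hj))
    have I2 : Integrable (fun a => (fdiff h)^[m] (g a) (x + h)) ν ∧
        (fdiff h)^[m] (fun x => ∫ a, g a x ∂ν) (x + h) =
          ∫ a, (fdiff h)^[m] (g a) (x + h) ∂ν := by
      apply ih (x + h)
      intro j hj
      have := hint (j+1) (Nat.succ_le_succ hj)
      have harg : x + ((j+1 : ℕ) : ℝ) * h = x + h + (j : ℝ) * h := by push_cast; ring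
      rw [harg] at this
      exact this
    have hfd : ∀ (F : ℝ → ℝ), (fdiff h)^[m+1] F x = (fdiff h)^[m] F (x + h) - (fdiff h)^[m] F x := by
      intro F
      rw [Function.iterate_succ_apply']
      rfl
    constructor
    · have : (fun a => (fdiff h)^[m+1] (g a) x) =
          fun a => (fdiff h)^[m] (g a) (x + h) - (fdiff h)^[m] (g a) x := by
        funext a; exact hfd (g a)
      rw [this]
      exact I2.1.sub I1.1
    · rw [hfd]
      rw [I2.2, I1.2, ← integral_sub I2.1 I1.1]
      congr 1
      funext a
      exact (hfd (g a)).symm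

/-- lower bound for the iterated difference of the integrand in `phi1` (at `y = 1`) -/
lemma phiz_fdiff_ge (h : ℝ) (hh : 0 < h) (k : ℕ) (z p e0 : ℝ)
    (hz : 1 < z) (hp : 0 < p) (x : ℝ) (hx : 0 ≤ x) (hxk : x + k * h ≤ 1) :
    (∏ j ∈ Finset.range k, (p + j)) * z ^ e0 * (z - 1) ^ k *
        (x + (1 - x) * z) ^ (-(p + k)) * h ^ k ≤
      (fdiff h)^[k] (fun t => z ^ e0 * (t + (1 - t) * z) ^ (-p)) x := by
  set f : ℕ → ℝ → ℝ := fun i t =>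
    (z ^ e0 * (∏ j ∈ Finset.range i, (p + j)) * (z - 1) ^ i) *
      (t + (1 - t) * z) ^ (-(p + i)) with hf
  have hBpos : ∀ t ∈ Icc x (x + k * h), 0 < t + (1 - t) * z := by
    intro t ht
    have ht1 : t ≤ 1 := le_trans ht.2 hxk
    nlinarith [ht.1, hx]
  have hchain : ∀ i < k, ∀ t ∈ Icc x (x + k * h), HasDerivAt (f i) (f (i+1) t) t := by
    intro i _ t ht
    have hB : HasDerivAt (fun t : ℝ => t + (1 - t) * z) (1 - z) t := by
      have h1 := ((hasDerivAt_const t (1:ℝ)).sub (hasDerivAt_id t)).mul_const z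
      have h2 := (hasDerivAt_id t).add h1
      exact h2.congr_deriv (by ring)
    have hBp := hB.rpow_const (p := -(p + i)) (Or.inl (ne_of_gt (hBpos t ht)))
    have h2 := hBp.const_mul (z ^ e0 * (∏ j ∈ Finset.range i, (p + j)) * (z - 1) ^ i)
    refine h2.congr_deriv ?_
    simp only [hf]
    rw [Finset.prod_range_succ]
    have hexp : -(p + ((i+1 : ℕ) : ℝ)) = -(p + (i : ℝ)) - 1 := by push_cast; ring
    rw [hexp, pow_succ]
    ring
  have hbound : ∀ t ∈ Icc x (x + k * h),
      (∏ j ∈ Finset.range k, (p + j)) * z ^ e0 * (z - 1) ^ k *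
        (x + (1 - x) * z) ^ (-(p + k)) ≤ f k t := by
    intro t ht
    have hBle : t + (1 - t) * z ≤ x + (1 - x) * z := by nlinarith [ht.1]
    have h1 : (x + (1 - x) * z) ^ (-(p + (k:ℝ))) ≤ (t + (1 - t) * z) ^ (-(p + (k:ℝ))) :=
      Real.rpow_le_rpow_of_nonpos (hBpos t ht) hBle
        (neg_nonpos.mpr (by positivity))
    have hC : 0 ≤ z ^ e0 * (∏ j ∈ Finset.range k, (p + j)) * (z - 1) ^ k := by
      have h2 : (0:ℝ) < z ^ e0 := Real.rpow_pos_of_pos (by linarith) e0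
      have h3 : (0:ℝ) ≤ ∏ j ∈ Finset.range k, (p + j) :=
        Finset.prod_nonneg fun j _ => add_nonneg hp.le (Nat.cast_nonneg j)
      exact mul_nonneg (mul_nonneg h2.le h3) (pow_nonneg (by linarith) k)
    calc (∏ j ∈ Finset.range k, (p + j)) * z ^ e0 * (z - 1) ^ k *
          (x + (1 - x) * z) ^ (-(p + k))
        = (z ^ e0 * (∏ j ∈ Finset.range k, (p + j)) * (z - 1) ^ k) *
          (x + (1 - x) * z) ^ (-(p + (k:ℝ))) := by ring
      _ ≤ (z ^ e0 * (∏ j ∈ Finset.range k, (p + j)) * (z - 1) ^ k) *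
          (t + (1 - t) * z) ^ (-(p + (k:ℝ))) := mul_le_mul_of_nonneg_left h1 hC
      _ = f k t := rfl
  have hmain := fdiff_iter_ge h hh k f x _ hchain hbound
  have hcongr : (fdiff h)^[k] (f 0) x =
      (fdiff h)^[k] (fun t => z ^ e0 * (t + (1 - t) * z) ^ (-p)) x := by
    apply fdiff_iter_congr h hh
    intro t _
    simp [hf]
  rw [hcongr] at hmain
  exact hmain
end Stmt18Aux

open Stmt18Aux

set_option maxHeartbeats 2000000 in
/-- If `(X₁, Y₁)` is a nonnegative integer-valued random vector with probability
generating function `φ₁` (with `c₁ = 1/(αin-1)`, i.e. `αin = 1 + 1/c₁`), then for any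
integer `k > αin - 1` the `k`-th moment of `X₁` is infinite. -/
theorem stmt18 {Ω : Type*} [MeasurableSpace Ω] (μ : Measure Ω) [IsProbabilityMeasure μ]
    (X Y : Ω → ℕ) (hX : Measurable X) (hY : Measurable Y)
    (c₁ a δin δout αin : ℝ)
    (hc₁ : 0 < c₁) (ha : 0 < a) (hin : 0 < δin) (hout : 0 < δout)
    (hαin : αin = 1 + 1 / c₁)
    (hpgf : ∀ x y : ℝ, 0 ≤ x → x ≤ 1 → 0 ≤ y → y ≤ 1 →
      ∫ ω, x ^ (X ω) * y ^ (Y ω) ∂μ = phi1 c₁ a δin δout x y)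
    (k : ℕ) (hk : αin - 1 < k) :
    ∫⁻ ω, ((X ω : ℝ≥0∞)) ^ k ∂μ = ⊤ := by
  classical
  by_contra hM
  -- basic constants
  have hcinv : (0:ℝ) < 1 / c₁ := by positivity
  have h1c : (1:ℝ) / c₁ < k := by rw [hαin] at hk; linarith
  have hkposR : (0:ℝ) < k := lt_trans hcinv h1c
  have hkpos : 0 < k := by exact_mod_cast hkposR
  set θ : ℝ := (k : ℝ) - 1 / c₁ with hθdef
  have hθ : 0 < θ := by simp only [hθdef]; linarith
  set e0 : ℝ := -(1 + 1 / c₁) with he0def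
  set p : ℝ := δin + 1 with hpdef
  have hp : 0 < p := by simp only [hpdef]; linarith
  set ck : ℝ := ∏ j ∈ Finset.range k, (p + j) with hckdef
  have hck : 0 < ck := Finset.prod_pos fun j _ => by positivity
  -- integrability of X^k
  have hXmeas : ∀ x' : ℝ, Measurable (fun ω => x' ^ (X ω)) := fun x' =>
    (measurable_from_top (f := fun n : ℕ => x' ^ n)).comp hX
  have hXkmeas : Measurable (fun ω => ((X ω : ℝ)) ^ k) :=
    ((measurable_from_top (f := fun n : ℕ => (n:ℝ))).comp hX).pow_const k
  have hXk_int : Integrable (fun ω => ((X ω : ℝ)) ^ k) μ := by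
    refine ⟨hXkmeas.aestronglyMeasurable, ?_⟩
    have heq : ∀ ω, (‖((X ω : ℝ)) ^ k‖₊ : ℝ≥0∞) = ((X ω : ℝ≥0∞)) ^ k := by
      intro ω
      have h1 : ((X ω : ℝ)) ^ k = (((X ω ^ k : ℕ)) : ℝ) := by push_cast; ring
      rw [h1, Real.nnnorm_natCast]
      push_cast
      ring
    unfold HasFiniteIntegral
    calc ∫⁻ ω, (‖((X ω : ℝ)) ^ k‖₊ : ℝ≥0∞) ∂μ = ∫⁻ ω, ((X ω : ℝ≥0∞)) ^ k ∂μ := by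
          exact lintegral_congr heq
      _ < ⊤ := lt_top_iff_ne_top.2 hM
  set M' : ℝ := ∫ ω, ((X ω : ℝ)) ^ k ∂μ with hM'def
  have hM'0 : 0 ≤ M' := integral_nonneg fun ω => by positivity
  set K : ℝ := c₁⁻¹ * ck * (2:ℝ) ^ (-(p + (k:ℝ))) / 4 ^ (k+1) with hKdef
  have hK : 0 < K := by
    have h2 : (0:ℝ) < (2:ℝ) ^ (-(p + (k:ℝ))) := Real.rpow_pos_of_pos two_pos _
    have h4 : (0:ℝ) < (4:ℝ) ^ (k+1) := by positivity
    simp only [hKdef]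
    positivity
  -- the key quantitative bound
  have key : ∀ T : ℝ, 4 ≤ T → K * T ^ θ ≤ M' := by
    intro T hT4
    have hT1 : (1:ℝ) < T := by linarith
    set ε : ℝ := 1 / (T - 1) with hεdef
    have hε : 0 < ε := by rw [hεdef]; exact div_pos one_pos (by linarith)
    have hεT : ε * (T - 1) = 1 := by
      rw [hεdef, div_mul_eq_mul_div, one_mul, div_self (by linarith : T - 1 ≠ 0)]
    have hε3 : ε ≤ 1 / 3 := by
      rw [hεdef]
      rw [div_le_div_iff₀ (by linarith) (by norm_num)]
      linarith
    set x₀ : ℝ := 1 - ε with hx₀def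
    set h : ℝ := ε / k with hhdef
    have hh : 0 < h := by simp only [hhdef]; positivity
    have hx₀ : 0 ≤ x₀ := by simp only [hx₀def]; linarith
    have hsum : x₀ + (k:ℝ) * h = 1 := by
      simp only [hx₀def, hhdef]
      field_simp
      ring
    -- pointwise PGF identity at y = 1
    have hF : ∀ x : ℝ, 0 ≤ x → x ≤ 1 →
        ∫ ω, x ^ (X ω) ∂μ =
          c₁⁻¹ * ∫ z in Ioi (1:ℝ), z ^ e0 * (x + (1 - x) * z) ^ (-p) := by
      intro x h0 h1
      have hpg := hpgf x 1 h0 h1 zero_le_one le_rfl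
      simp only [one_pow, mul_one] at hpg
      rw [hpg]
      unfold phi1
      simp only [sub_self, zero_mul, add_zero, Real.one_rpow, mul_one, he0def, hpdef]
    -- μ-side: iterated difference bounded by moment
    have hptmem : ∀ j : ℕ, j ≤ k → 0 ≤ x₀ + (j:ℝ) * h ∧ x₀ + (j:ℝ) * h ≤ 1 := by
      intro j hj
      constructor
      · have : (0:ℝ) ≤ (j:ℝ) * h := by positivity
        linarith
      · have : (j:ℝ) * h ≤ (k:ℝ) * h := by
          apply mul_le_mul_of_nonneg_right _ hh.le
          exact_mod_cast hj
        linarith [hsum]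
    have hint_mu : ∀ j : ℕ, j ≤ k →
        Integrable (fun ω => (x₀ + (j:ℝ) * h) ^ (X ω)) μ := by
      intro j hj
      obtain ⟨hj0, hj1⟩ := hptmem j hj
      refine Integrable.mono' (integrable_const (1:ℝ))
        (hXmeas _).aestronglyMeasurable (ae_of_all _ fun ω => ?_)
      rw [Real.norm_eq_abs, abs_pow, abs_of_nonneg hj0]
      exact pow_le_one₀ hj0 hj1
    have hcomm_mu := integral_fdiff_iter μ h (fun ω x => x ^ (X ω)) k x₀ hint_mu
    have hEub : (fdiff h)^[k] (fun x => ∫ ω, x ^ (X ω) ∂μ) x₀ ≤ M' * h ^ k := by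
      rw [hcomm_mu.2]
      have hmono : ∀ ω, (fdiff h)^[k] (fun x => x ^ (X ω)) x₀ ≤ ((X ω : ℝ)) ^ k * h ^ k := by
        intro ω
        exact (pow_fdiff_bounds h hh (X ω) k x₀ hx₀ (le_of_eq hsum)).2
      calc ∫ ω, (fdiff h)^[k] (fun x => x ^ (X ω)) x₀ ∂μ
          ≤ ∫ ω, ((X ω : ℝ)) ^ k * h ^ k ∂μ :=
            integral_mono hcomm_mu.1 (hXk_int.mul_const _) hmono
        _ = M' * h ^ k := by rw [integral_mul_const]
    -- z-side
    set gz : ℝ → ℝ → ℝ := fun z x => z ^ e0 * (x + (1 - x) * z) ^ (-p) with hgzdef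
    have he0lt : e0 < -1 := by simp only [he0def]; linarith
    have hwint : IntegrableOn (fun z : ℝ => z ^ e0) (Ioi 1) :=
      integrableOn_Ioi_rpow_of_lt he0lt one_pos
    have hint_z : ∀ x' : ℝ, 0 ≤ x' → x' ≤ 1 →
        IntegrableOn (fun z => gz z x') (Ioi 1) := by
      intro x' h0 h1
      have hbase : ∀ z ∈ Ioi (1:ℝ), (1:ℝ) ≤ x' + (1 - x') * z := by
        intro z hz
        simp only [mem_Ioi] at hz
        have h2 : (1 - x') * 1 ≤ (1 - x') * z :=
          mul_le_mul_of_nonneg_left hz.le (by linarith)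
        linarith
      have hcont : ContinuousOn (fun z => gz z x') (Ioi 1) := by
        apply ContinuousOn.mul
        · exact continuousOn_id.rpow_const fun z hz =>
            Or.inl (ne_of_gt (lt_trans one_pos hz))
        · apply ContinuousOn.rpow_const
          · exact continuousOn_const.add (continuousOn_const.mul continuousOn_id)
          · intro z hz
            exact Or.inl (by have := hbase z hz; intro hc; rw [hc] at this; linarith)
      refine Integrable.mono' hwint (hcont.aestronglyMeasurable measurableSet_Ioi) ?_
      rw [ae_restrict_iff' measurableSet_Ioi]
      refine ae_of_all _ fun z hz => ?_
      simp only [mem_Ioi] at hz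
      have hz0 : (0:ℝ) < z := lt_trans one_pos hz
      have h2 : (0:ℝ) < z ^ e0 := Real.rpow_pos_of_pos hz0 e0
      have h3 : (0:ℝ) ≤ (x' + (1 - x') * z) ^ (-p) :=
        Real.rpow_nonneg (by linarith [hbase z hz]) _
      rw [Real.norm_eq_abs, abs_of_nonneg (mul_nonneg h2.le h3)]
      have h4 : (x' + (1 - x') * z) ^ (-p) ≤ 1 :=
        Real.rpow_le_one_of_one_le_of_nonpos (hbase z hz) (by linarith)
      calc gz z x' = z ^ e0 * (x' + (1 - x') * z) ^ (-p) := rfl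
        _ ≤ z ^ e0 * 1 := mul_le_mul_of_nonneg_left h4 h2.le
        _ = z ^ e0 := mul_one _
    have hint_z' : ∀ j : ℕ, j ≤ k →
        Integrable (fun z => gz z (x₀ + (j:ℝ) * h)) (volume.restrict (Ioi 1)) := by
      intro j hj
      exact hint_z _ (hptmem j hj).1 (hptmem j hj).2
    have hcomm_z := integral_fdiff_iter (volume.restrict (Ioi 1)) h gz k x₀ hint_z'
    -- connect the two sides
    have hFG : (fdiff h)^[k] (fun x => ∫ ω, x ^ (X ω) ∂μ) x₀ =
        c₁⁻¹ * (fdiff h)^[k] (fun x => ∫ z, gz z x ∂(volume.restrict (Ioi 1))) x₀ := by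
      rw [← fdiff_iter_const_mul]
      apply fdiff_iter_congr h hh
      intro t ht
      rw [hsum] at ht
      exact hF t (le_trans hx₀ ht.1) ht.2
    -- lower bounds for the z-side differences
    have hnonneg : ∀ z ∈ Ioi (1:ℝ), 0 ≤ (fdiff h)^[k] (gz z) x₀ := by
      intro z hz
      simp only [mem_Ioi] at hz
      have hlow := phiz_fdiff_ge h hh k z p e0 hz hp x₀ hx₀ (le_of_eq hsum)
      refine le_trans ?_ hlow
      have h2 : (0:ℝ) < z ^ e0 := Real.rpow_pos_of_pos (by linarith) e0
      have hb0 : (0:ℝ) ≤ (1 - x₀) * z := mul_nonneg (by rw [hx₀def]; linarith) (by linarith)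
      have h3 : (0:ℝ) ≤ (x₀ + (1 - x₀) * z) ^ (-(p + (k:ℝ))) :=
        Real.rpow_nonneg (by linarith) _
      have h5 : (0:ℝ) ≤ (z-1) ^ k := pow_nonneg (by linarith) k
      rw [← hckdef]
      exact mul_nonneg (mul_nonneg (mul_nonneg (mul_nonneg hck.le h2.le) h5) h3)
        (pow_nonneg hh.le k)
    set T₁ : ℝ := (1 + T) / 2 with hT₁def
    have hT₁1 : 1 < T₁ := by simp only [hT₁def]; linarith
    set LB : ℝ := ck * T ^ e0 * ((T - 1) / 2) ^ k * (2:ℝ) ^ (-(p + (k:ℝ))) with hLBdef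
    have hzlow : ∀ z ∈ Ioc T₁ T, LB * h ^ k ≤ (fdiff h)^[k] (gz z) x₀ := by
      intro z hz
      obtain ⟨hz1, hz2⟩ := hz
      have hz1' : (1:ℝ) < z := lt_trans hT₁1 hz1
      have hlow := phiz_fdiff_ge h hh k z p e0 hz1' hp x₀ hx₀ (le_of_eq hsum)
      refine le_trans ?_ hlow
      apply mul_le_mul_of_nonneg_right _ (by positivity : (0:ℝ) ≤ h ^ k)
      -- compare the constants
      have hzp : (0:ℝ) < z := by linarith
      have hTe : T ^ e0 ≤ z ^ e0 :=
        Real.rpow_le_rpow_of_nonpos hzp hz2 (by simp only [he0def]; linarith)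
      have hze : (0:ℝ) < z ^ e0 := Real.rpow_pos_of_pos hzp e0
      have hz1m : ((T - 1) / 2) ^ k ≤ (z - 1) ^ k := by
        apply pow_le_pow_left₀ (by linarith) _ k
        simp only [hT₁def] at hz1
        linarith
      have hbase2 : x₀ + (1 - x₀) * z ≤ 2 := by
        have h1 : (1:ℝ) - x₀ = ε := by simp only [hx₀def]; ring
        rw [h1]
        have ha1 : ε * z ≤ ε * T := mul_le_mul_of_nonneg_left hz2 hε.le
        have ha3 : ε * T = ε * (T - 1) + ε := by ring
        have ha4 : x₀ = 1 - ε := hx₀def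
        linarith [hεT]
      have hbase1 : (0:ℝ) < x₀ + (1 - x₀) * z := by
        have hb0 : (0:ℝ) < (1 - x₀) * z := mul_pos (by rw [hx₀def]; linarith) (by linarith)
        linarith
      have h2e : (2:ℝ) ^ (-(p + (k:ℝ))) ≤ (x₀ + (1 - x₀) * z) ^ (-(p + (k:ℝ))) :=
        Real.rpow_le_rpow_of_nonpos hbase1 hbase2 (neg_nonpos.mpr (by positivity))
      calc LB = ck * T ^ e0 * ((T - 1) / 2) ^ k * (2:ℝ) ^ (-(p + (k:ℝ))) := rfl
        _ ≤ ck * z ^ e0 * (z - 1) ^ k * (x₀ + (1 - x₀) * z) ^ (-(p + (k:ℝ))) := by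
            apply mul_le_mul
            · apply mul_le_mul
              · exact mul_le_mul_of_nonneg_left hTe hck.le
              · exact hz1m
              · exact pow_nonneg (by linarith) k
              · exact mul_nonneg hck.le hze.le
            · exact h2e
            · positivity
            · exact mul_nonneg (mul_nonneg hck.le hze.le) (pow_nonneg (by linarith) k)
    -- integral lower bound
    have hDint : IntegrableOn (fun z => (fdiff h)^[k] (gz z) x₀) (Ioi 1) := hcomm_z.1
    have hstep1 : (∫ z in Ioc T₁ T, (fdiff h)^[k] (gz z) x₀) ≤
        ∫ z in Ioi 1, (fdiff h)^[k] (gz z) x₀ := by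
      apply setIntegral_mono_set hDint
      · exact (ae_restrict_iff' measurableSet_Ioi).mpr (ae_of_all _ fun z hz => hnonneg z hz)
      · exact HasSubset.Subset.eventuallyLE fun z hz => lt_trans hT₁1 hz.1
    have hstep2 : ((T - 1)/2) * (LB * h ^ k) ≤
        ∫ z in Ioc T₁ T, (fdiff h)^[k] (gz z) x₀ := by
      have hconst : (∫ _ in Ioc T₁ T, (LB * h ^ k) ∂volume) = ((T - 1)/2) * (LB * h^k) := by
        rw [setIntegral_const, Real.volume_real_Ioc_of_le (by simp only [hT₁def]; linarith),
          smul_eq_mul]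
        congr 1
        simp only [hT₁def]
        ring
      rw [← hconst]
      apply setIntegral_mono_on
      · exact integrableOn_const (by rw [Real.volume_Ioc]; exact ENNReal.ofReal_ne_top)
      · exact hDint.mono_set (fun z hz => lt_trans hT₁1 hz.1)
      · exact measurableSet_Ioc
      · exact hzlow
    have hchain : c₁⁻¹ * (((T-1)/2) * (LB * h ^ k)) ≤ M' * h ^ k := by
      calc c₁⁻¹ * (((T-1)/2) * (LB * h^k))
          ≤ c₁⁻¹ * ∫ z in Ioi 1, (fdiff h)^[k] (gz z) x₀ :=
            mul_le_mul_of_nonneg_left (le_trans hstep2 hstep1) (inv_nonneg.mpr hc₁.le)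
        _ = (fdiff h)^[k] (fun x => ∫ ω, x ^ (X ω) ∂μ) x₀ := by rw [hFG, hcomm_z.2]
        _ ≤ M' * h ^ k := hEub
    have hcancel : c₁⁻¹ * (((T-1)/2) * LB) ≤ M' := by
      have hhk : (0:ℝ) < h ^ k := by positivity
      have h2 : c₁⁻¹ * (((T-1)/2) * LB) * h^k ≤ M' * h^k := by
        calc c₁⁻¹ * (((T-1)/2) * LB) * h^k = c₁⁻¹ * (((T-1)/2) * (LB * h^k)) := by ring
          _ ≤ M' * h^k := hchain
      exact le_of_mul_le_mul_right h2 hhk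
    have hTpos : (0:ℝ) < T := by linarith
    have hfinal : K * T ^ θ ≤ c₁⁻¹ * (((T-1)/2) * LB) := by
      have hTq : T ^ θ = T ^ (k+1 : ℕ) * T ^ e0 := by
        rw [← Real.rpow_natCast T (k+1), ← Real.rpow_add hTpos]
        congr 1
        simp only [he0def, hθdef]
        push_cast
        ring
      have hgeo : (T/4) ^ (k+1) ≤ ((T-1)/2) ^ (k+1) :=
        pow_le_pow_left₀ (by linarith) (by linarith) _
      have hTe0 : (0:ℝ) < T ^ e0 := Real.rpow_pos_of_pos hTpos _
      have h2p : (0:ℝ) < (2:ℝ) ^ (-(p + (k:ℝ))) := Real.rpow_pos_of_pos two_pos _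
      have hmul : c₁⁻¹ * ck * (2:ℝ) ^ (-(p + (k:ℝ))) * T ^ e0 * (T/4) ^ (k+1) ≤
          c₁⁻¹ * ck * (2:ℝ) ^ (-(p + (k:ℝ))) * T ^ e0 * ((T-1)/2) ^ (k+1) := by
        apply mul_le_mul_of_nonneg_left hgeo
        positivity
      calc K * T ^ θ
          = c₁⁻¹ * ck * (2:ℝ) ^ (-(p + (k:ℝ))) * T ^ e0 * (T/4) ^ (k+1) := by
            rw [hTq, hKdef, div_pow]
            ring
        _ ≤ c₁⁻¹ * ck * (2:ℝ) ^ (-(p+(k:ℝ))) * T ^ e0 * ((T-1)/2)^(k+1) := hmul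
        _ = c₁⁻¹ * (((T-1)/2) * LB) := by
            simp only [hLBdef]
            rw [pow_succ]
            ring
    exact le_trans hfinal hcancel
  -- final contradiction
  set T : ℝ := max 4 ((M'/K + 1) ^ θ⁻¹) with hTdef
  have hT4 : (4:ℝ) ≤ T := le_max_left _ _
  have hkey := key T hT4
  have hTb : (M'/K + 1) ^ θ⁻¹ ≤ T := le_max_right _ _
  have hbase : (0:ℝ) ≤ M'/K + 1 := by positivity
  have h2 : M'/K + 1 ≤ T ^ θ := by
    have h3 : ((M'/K + 1) ^ θ⁻¹) ^ θ ≤ T ^ θ :=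
      Real.rpow_le_rpow (Real.rpow_nonneg hbase _) hTb hθ.le
    rwa [Real.rpow_inv_rpow hbase (ne_of_gt hθ)] at h3
  have h5 : K * (M'/K + 1) ≤ K * T ^ θ := mul_le_mul_of_nonneg_left h2 hK.le
  have h6 : K * (M'/K + 1) = M' + K := by field_simp
  linarith
end
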